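/- arXiv:1106.0111 — 7 statements merged into one kernel-verified Lean document; each statement's English description precedes it below -/
import Mathlib

section
/- If a bounded continuous function f : ℝ → ℝ has a d-horseshoe (for some integer d ≥ 1), then the topological entropy of f satisfies h_top(f) ≥ log d. -/
open Set
open scoped ENNReal

lemma pullback_core {f : ℝ → ℝ} (hf : Continuous f) {p q c d : ℝ} (hpq : p ≤ q)
    (hc : f p = c) (hd : f q = d) (hcd : c < d) :
    ∃ r : ℝ × ℝ, p ≤ r.1 ∧ r.1 < r.2 ∧ r.2 ≤ q ∧
      f '' Icc r.1 r.2 = Icc c d ∧ f '' Ioo r.1 r.2 ⊆ Ioo c d := by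
  set S : Set ℝ := Icc p q ∩ f ⁻¹' {c} with hS
  have hSne : S.Nonempty := ⟨p, ⟨left_mem_Icc.2 hpq, hc⟩⟩
  have hScpt : IsCompact S :=
    isCompact_Icc.inter_right (IsClosed.preimage hf isClosed_singleton)
  obtain ⟨haS, ha⟩ : sSup S ∈ S ∧ sSup S = sSup S := ⟨hScpt.sSup_mem hSne, rfl⟩
  set a : ℝ := sSup S with ha'
  have hfa : f a = c := haS.2
  have hap : p ≤ a := haS.1.1
  have haq : a ≤ q := haS.1.2
  set T : Set ℝ := Icc a q ∩ f ⁻¹' {d} with hT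
  have hTne : T.Nonempty := ⟨q, ⟨right_mem_Icc.2 haq, hd⟩⟩
  have hTcpt : IsCompact T :=
    isCompact_Icc.inter_right (IsClosed.preimage hf isClosed_singleton)
  have hbT : sInf T ∈ T := hTcpt.sInf_mem hTne
  set b : ℝ := sInf T with hb'
  have hfb : f b = d := hbT.2
  have hab : a ≤ b := hbT.1.1
  have hbq : b ≤ q := hbT.1.2
  have hab' : a < b := by
    rcases lt_or_eq_of_le hab with h | h
    · exact h
    · exact absurd (h ▸ hfa) (by rw [hfb] at *; exact fun hh => hcd.ne (hh ▸ rfl))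
  -- no value equal to c strictly above a (within [a, b]), none equal to d strictly below b
  have hnotc : ∀ x, a < x → x ≤ b → f x ≠ c := by
    intro x hax hxb hfx
    have : x ∈ S := ⟨⟨hap.trans hax.le, hxb.trans hbq⟩, hfx⟩
    exact absurd (le_csSup (hScpt.bddAbove) this) (not_le.2 hax)
  have hnotd : ∀ x, a ≤ x → x < b → f x ≠ d := by
    intro x hax hxb hfx
    have : x ∈ T := ⟨⟨hax, hxb.le.trans hbq⟩, hfx⟩
    exact absurd (csInf_le (hTcpt.bddBelow) this) (not_le.2 hxb)
  have himg : f '' Icc a b = Icc c d := by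
    have hsub : Icc c d ⊆ f '' Icc a b := by
      have := intermediate_value_Icc hab hf.continuousOn
      rwa [hfa, hfb] at this
    refine Subset.antisymm ?_ hsub
    rintro _ ⟨x, hx, rfl⟩
    by_contra hmem
    simp only [mem_Icc, not_and_or, not_le] at hmem
    have hax : a < x := by
      rcases lt_or_eq_of_le hx.1 with h | h
      · exact h
      · exfalso; rcases hmem with h1 | h1
        · exact absurd (h ▸ hfa) (by intro hh; rw [hh] at h1; exact lt_irrefl _ h1)
        · exact absurd (h ▸ hfa) (by intro hh; rw [hh] at h1; exact absurd h1 (not_lt.2 hcd.le))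
    have hxb : x < b := by
      rcases lt_or_eq_of_le hx.2 with h | h
      · exact h
      · exfalso; rcases hmem with h1 | h1
        · rw [h, hfb] at h1; exact absurd h1 (not_lt.2 hcd.le)
        · rw [h, hfb] at h1; exact lt_irrefl _ h1
    rcases hmem with h1 | h1
    · -- f x < c; IVT on [x, b] hits c strictly above a
      have h2 : c ∈ Icc (f x) (f b) := ⟨h1.le, by rw [hfb]; exact hcd.le⟩
      obtain ⟨y, hy, hfy⟩ := intermediate_value_Icc hx.2 hf.continuousOn h2
      have hxy : x ≠ y := fun h => h1.ne (by rw [h, hfy])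
      exact hnotc y (hax.trans_le (lt_of_le_of_ne hy.1 hxy).le) hy.2 hfy
    · -- f x > d; IVT on [a, x] hits d strictly below b
      have h2 : d ∈ Icc (f a) (f x) := ⟨by rw [hfa]; exact hcd.le, h1.le⟩
      obtain ⟨y, hy, hfy⟩ := intermediate_value_Icc hx.1 hf.continuousOn h2
      have hxy : y ≠ x := fun h => h1.ne' (by rw [← h, hfy])
      exact hnotd y hy.1 ((lt_of_le_of_ne hy.2 hxy).trans_le hxb.le) hfy
  refine ⟨(a, b), hap, hab', hbq, himg, ?_⟩
  rintro _ ⟨x, hx, rfl⟩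
  have hmem : f x ∈ Icc c d := himg ▸ mem_image_of_mem f (Ioo_subset_Icc_self hx)
  refine ⟨lt_of_le_of_ne hmem.1 (fun h => hnotc x hx.1 hx.2.le h.symm), 
    lt_of_le_of_ne hmem.2 (fun h => hnotd x hx.1.le hx.2 h)⟩

lemma pullback {f : ℝ → ℝ} (hf : Continuous f) {a b c d : ℝ} (hcd : c < d)
    (h : Icc c d ⊆ f '' Icc a b) :
    ∃ r : ℝ × ℝ, a ≤ r.1 ∧ r.1 < r.2 ∧ r.2 ≤ b ∧
      f '' Icc r.1 r.2 = Icc c d ∧ f '' Ioo r.1 r.2 ⊆ Ioo c d := by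
  obtain ⟨u, hu, hfu⟩ := h (left_mem_Icc.2 hcd.le)
  obtain ⟨v, hv, hfv⟩ := h (right_mem_Icc.2 hcd.le)
  rcases le_or_gt u v with huv | hvu
  · obtain ⟨r, h1, h2, h3, h4, h5⟩ := pullback_core hf huv hfu hfv hcd
    exact ⟨r, hu.1.trans h1, h2, h3.trans hv.2, h4, h5⟩
  · -- reflect: g x = f (-x)
    have hg : Continuous (fun x : ℝ => f (-x)) := hf.comp continuous_neg
    have h1 : (-u : ℝ) ≤ -v := neg_le_neg hvu.le
    have h2 : (fun x : ℝ => f (-x)) (-u) = c := by simp [hfu]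
    have h3 : (fun x : ℝ => f (-x)) (-v) = d := by simp [hfv]
    obtain ⟨r, hr1, hr2, hr3, hr4, hr5⟩ := pullback_core hg h1 h2 h3 hcd
    refine ⟨(-r.2, -r.1), ?_, by simpa using hr2, ?_, ?_, ?_⟩
    · have : v ≤ -r.2 := by linarith [hr3]
      exact hv.1.trans this
    · have : -r.1 ≤ u := by linarith [hr1]
      exact this.trans hu.2
    · rw [← hr4]
      ext y
      constructor
      · rintro ⟨x, hx, rfl⟩
        simp only [mem_Icc] at hx
        exact ⟨-x, by simp only [mem_Icc]; constructor <;> linarith [hx.1, hx.2], by simp⟩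
      · rintro ⟨x, hx, rfl⟩
        simp only [mem_Icc] at hx
        exact ⟨-x, by simp only [mem_Icc]; constructor <;> linarith [hx.1, hx.2], by simp⟩
    · rintro _ ⟨x, hx, rfl⟩
      simp only [mem_Ioo] at hx
      exact hr5 ⟨-x, by simp only [mem_Ioo]; constructor <;> linarith [hx.1, hx.2], by simp⟩

section Words

variable {f : ℝ → ℝ} {d : ℕ} {I : Fin d → ℝ × ℝ}

lemma word_family (hf : Continuous f) (hI : ∀ i, (I i).1 < (I i).2)
    (hcov : ∀ i j, Icc (I j).1 (I j).2 ⊆ f '' Icc (I i).1 (I i).2) (n : ℕ) :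
    ∃ K : (ℕ → Fin d) → ℝ × ℝ, ∀ w : ℕ → Fin d,
      ((K w).1 < (K w).2) ∧
      (f^[n] '' Icc (K w).1 (K w).2 = Icc (I (w n)).1 (I (w n)).2) ∧
      (∀ k ≤ n, f^[k] '' Ioo (K w).1 (K w).2 ⊆ Ioo (I (w k)).1 (I (w k)).2) := by
  induction n with
  | zero =>
    refine ⟨fun w => I (w 0), fun w => ⟨hI _, by simp, ?_⟩⟩
    intro k hk
    interval_cases k
    simp
  | succ n ih =>
    obtain ⟨K, hK⟩ := ih
    have key : ∀ w : ℕ → Fin d, ∃ r : ℝ × ℝ, (I (w 0)).1 ≤ r.1 ∧ r.1 < r.2 ∧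
        r.2 ≤ (I (w 0)).2 ∧
        f '' Icc r.1 r.2 = Icc (K (fun k => w (k+1))).1 (K (fun k => w (k+1))).2 ∧
        f '' Ioo r.1 r.2 ⊆ Ioo (K (fun k => w (k+1))).1 (K (fun k => w (k+1))).2 := by
      intro w
      have h1 := (hK (fun k => w (k+1))).1
      have h2 : Icc (K (fun k => w (k+1))).1 (K (fun k => w (k+1))).2 ⊆
          f '' Icc (I (w 0)).1 (I (w 0)).2 := by
        have h3 := (hK (fun k => w (k+1))).2.2 0 (Nat.zero_le n)
        simp only [Function.iterate_zero, image_id] at h3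
        have h4 : Icc (K (fun k => w (k+1))).1 (K (fun k => w (k+1))).2 ⊆
            Icc (I (w 1)).1 (I (w 1)).2 := by
          rw [← closure_Ioo h1.ne]
          exact closure_minimal (h3.trans Ioo_subset_Icc_self) isClosed_Icc
        exact h4.trans (hcov (w 0) (w 1))
      exact pullback hf h1 h2
    choose K' hK'1 hK'2 hK'3 hK'4 hK'5 using key
    refine ⟨K', fun w => ⟨hK'2 w, ?_, ?_⟩⟩
    · rw [Function.iterate_succ, Set.image_comp, hK'4 w]
      exact (hK (fun k => w (k+1))).2.1
    · intro k hk
      cases k with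
      | zero =>
        simp only [Function.iterate_zero, image_id]
        intro x hx
        exact ⟨lt_of_le_of_lt (hK'1 w) hx.1, lt_of_lt_of_le hx.2 (hK'3 w)⟩
      | succ k =>
        rw [Function.iterate_succ, Set.image_comp]
        exact (Set.image_mono (hK'5 w)).trans
          ((hK (fun k => w (k+1))).2.2 k (Nat.succ_le_succ_iff.1 hk))

lemma iter_horseshoe (hf : Continuous f) (hI : ∀ i, (I i).1 < (I i).2)
    (hdisj : ∀ i j, i ≠ j → Disjoint (Ioo (I i).1 (I i).2) (Ioo (I j).1 (I j).2))
    (hcov : ∀ i j, Icc (I j).1 (I j).2 ⊆ f '' Icc (I i).1 (I i).2) (n : ℕ) :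
    ∃ L : (Fin (n+1) → Fin d) → ℝ × ℝ,
      (∀ W, (L W).1 < (L W).2) ∧
      (∀ W, Icc (L W).1 (L W).2 ⊆ Set.range f) ∧
      (∀ W W', W ≠ W' → Disjoint (Ioo (L W).1 (L W).2) (Ioo (L W').1 (L W').2)) ∧
      (∀ W W', Icc (L W').1 (L W').2 ⊆ f^[n+1] '' Icc (L W).1 (L W).2) := by
  obtain ⟨K, hK⟩ := word_family hf hI hcov n
  have hsub : ∀ w : ℕ → Fin d, Icc (K w).1 (K w).2 ⊆ Icc (I (w 0)).1 (I (w 0)).2 := by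
    intro w
    have h3 := (hK w).2.2 0 (Nat.zero_le n)
    simp only [Function.iterate_zero, image_id] at h3
    rw [← closure_Ioo (hK w).1.ne]
    exact closure_minimal (h3.trans Ioo_subset_Icc_self) isClosed_Icc
  set e : (Fin (n+1) → Fin d) → ℕ → Fin d := fun W k => W ⟨min k n, by omega⟩ with he_def
  have he : ∀ (W : Fin (n+1) → Fin d) (k : Fin (n+1)), e W k.val = W k := by
    intro W k
    have : (⟨min k.val n, by omega⟩ : Fin (n+1)) = k := by
      ext; simp [Nat.min_eq_left (Nat.lt_succ_iff.1 k.isLt)]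
    rw [he_def]; simp only; rw [this]
  refine ⟨fun W => K (e W), fun W => (hK (e W)).1, ?_, ?_, ?_⟩
  · intro W
    refine (hsub (e W)).trans ((hcov (e W 0) (e W 0)).trans (Set.image_subset_range _ _))
  · intro W W' hne
    obtain ⟨k, hk⟩ := Function.ne_iff.1 hne
    rw [Set.disjoint_left]
    intro x hx hx'
    have h1 : f^[k.val] x ∈ Ioo (I (e W k.val)).1 (I (e W k.val)).2 :=
      (hK (e W)).2.2 k.val (Nat.lt_succ_iff.1 k.isLt) (mem_image_of_mem _ hx)
    have h2 : f^[k.val] x ∈ Ioo (I (e W' k.val)).1 (I (e W' k.val)).2 :=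
      (hK (e W')).2.2 k.val (Nat.lt_succ_iff.1 k.isLt) (mem_image_of_mem _ hx')
    rw [he W k] at h1
    rw [he W' k] at h2
    exact Set.disjoint_left.1 (hdisj (W k) (W' k) hk) h1 h2
  · intro W W'
    rw [Function.iterate_succ', Set.image_comp, (hK (e W)).2.1]
    exact (hsub (e W')).trans (by simpa using hcov (e W n) (e W' 0))

end Words
lemma select_disjoint {ι : Type*} [DecidableEq ι] (p : ι → ℝ × ℝ) :
    ∀ (N : ℕ) (T : Finset ι), T.card ≤ N → (∀ i ∈ T, (p i).1 < (p i).2) →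
    (∀ i ∈ T, ∀ j ∈ T, i ≠ j → Disjoint (Ioo (p i).1 (p i).2) (Ioo (p j).1 (p j).2)) →
    ∃ S : Finset ι, S ⊆ T ∧ T.card ≤ 2 * S.card ∧
      ∀ i ∈ S, ∀ j ∈ S, i ≠ j → Disjoint (Icc (p i).1 (p i).2) (Icc (p j).1 (p j).2) := by
  intro N
  induction N with
  | zero =>
    intro T hT _ _
    refine ⟨∅, Finset.empty_subset _, ?_, by simp⟩
    simp [Nat.le_zero.1 hT]
  | succ N ih =>
    intro T hT hnd hdisj
    rcases T.eq_empty_or_nonempty with rfl | hTne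
    · exact ⟨∅, Finset.empty_subset _, by simp, by simp⟩
    obtain ⟨i, hiT, hmin⟩ := T.exists_min_image (fun i => (p i).2) hTne
    classical
    set B : Finset ι := T.filter (fun j => j ≠ i ∧ ¬ Disjoint (Icc (p j).1 (p j).2)
      (Icc (p i).1 (p i).2)) with hB
    have key : ∀ k, k ∈ T → k ≠ i → ¬ Disjoint (Icc (p k).1 (p k).2) (Icc (p i).1 (p i).2) →
        (p k).1 = (p i).2 := by
      intro k hkT hki hndisj
      have hdich : (p i).2 ≤ (p k).1 ∨ (p k).2 ≤ (p i).1 := by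
        by_contra hcon
        push_neg at hcon
        have hne : (Ioo (p i).1 (p i).2 ∩ Ioo (p k).1 (p k).2).Nonempty := by
          rw [Ioo_inter_Ioo]
          refine nonempty_Ioo.2 ?_
          simp only [lt_inf_iff, sup_lt_iff]
          exact ⟨⟨hnd i hiT, hcon.1⟩, ⟨hcon.2, hnd k hkT⟩⟩
        exact absurd (hdisj i hiT k hkT (Ne.symm hki))
          (Set.not_disjoint_iff_nonempty_inter.2 hne)
      rcases hdich with h | h
      · obtain ⟨x, hx1, hx2⟩ := Set.not_disjoint_iff.1 hndisj
        have := hx1.1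
        have := hx2.2
        linarith [hx1.1, hx2.2]
      · exfalso
        have h2 : (p i).2 ≤ (p k).2 := hmin k hkT
        linarith [hnd i hiT]
    have hBcard : B.card ≤ 1 := by
      refine Finset.card_le_one.2 ?_
      intro j hj j' hj'
      simp only [hB, Finset.mem_filter] at hj hj'
      have h1 : (p j).1 = (p i).2 := key j hj.1 hj.2.1 hj.2.2
      have h2 : (p j').1 = (p i).2 := key j' hj'.1 hj'.2.1 hj'.2.2
      by_contra hne
      have hne2 : (Ioo (p j).1 (p j).2 ∩ Ioo (p j').1 (p j').2).Nonempty := by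
        rw [Ioo_inter_Ioo]
        refine nonempty_Ioo.2 ?_
        simp only [lt_inf_iff, sup_lt_iff]
        refine ⟨⟨hnd j hj.1, ?_⟩, ?_, hnd j' hj'.1⟩
        · rw [h2, ← h1]; exact hnd j hj.1
        · rw [h1, ← h2]; exact hnd j' hj'.1
      exact absurd (hdisj j hj.1 j' hj'.1 hne)
        (Set.not_disjoint_iff_nonempty_inter.2 hne2)
    set T' : Finset ι := (T.erase i) \ B with hT'
    have hT'T : T' ⊆ T := (Finset.sdiff_subset).trans (Finset.erase_subset i T)
    have hT'card : T'.card ≤ N := by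
      have h1 : T'.card ≤ (T.erase i).card := Finset.card_le_card Finset.sdiff_subset
      have h2 : (T.erase i).card = T.card - 1 := Finset.card_erase_of_mem hiT
      have h3 : 1 ≤ T.card := Finset.card_pos.2 hTne
      omega
    obtain ⟨S', hS'sub, hS'card, hS'disj⟩ := ih T' hT'card
      (fun a ha => hnd a (hT'T ha)) (fun a ha b hb hab => hdisj a (hT'T ha) b (hT'T hb) hab)
    have hiS' : i ∉ S' := fun h =>
      (Finset.notMem_erase i T) (Finset.mem_sdiff.1 (hS'sub h)).1
    refine ⟨insert i S', Finset.insert_subset hiT (hS'sub.trans hT'T), ?_, ?_⟩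
    · rw [Finset.card_insert_of_notMem hiS']
      have h1 : (T.erase i).card ≤ T'.card + B.card := by
        calc (T.erase i).card ≤ ((T.erase i) \ B ∪ B).card :=
              Finset.card_le_card (fun x hx => by
                by_cases hxB : x ∈ B
                · exact Finset.mem_union_right _ hxB
                · exact Finset.mem_union_left _ (Finset.mem_sdiff.2 ⟨hx, hxB⟩))
          _ ≤ T'.card + B.card := Finset.card_union_le _ _
      have h2 : (T.erase i).card = T.card - 1 := Finset.card_erase_of_mem hiT
      have h3 : 1 ≤ T.card := Finset.card_pos.2 hTne
      omega
    · intro a ha b hb hab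
      rcases Finset.mem_insert.1 ha with rfl | haS'
      · rcases Finset.mem_insert.1 hb with rfl | hbS'
        · exact absurd rfl hab
        · have hbT' := hS'sub hbS'
          rw [Finset.mem_sdiff] at hbT'
          have hbB : b ∉ B := hbT'.2
          rw [hB, Finset.mem_filter] at hbB
          push_neg at hbB
          exact (hbB (hT'T (hS'sub hbS')) (Finset.ne_of_mem_erase hbT'.1)).symm
      · rcases Finset.mem_insert.1 hb with rfl | hbS'
        · have haT' := hS'sub haS'
          rw [Finset.mem_sdiff] at haT'
          have haB : a ∉ B := haT'.2
          rw [hB, Finset.mem_filter] at haB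
          push_neg at haB
          exact haB (hT'T (hS'sub haS')) (Finset.ne_of_mem_erase haT'.1)
        · exact hS'disj a haS' b hbS' hab

lemma itinerary {g : ℝ → ℝ} {ι : Type*} {L : ι → ℝ × ℝ} (hL : ∀ i, (L i).1 ≤ (L i).2)
    (hcov : ∀ i j, Icc (L j).1 (L j).2 ⊆ g '' Icc (L i).1 (L i).2) :
    ∀ (N : ℕ) (W : ℕ → ι), ∃ x, ∀ k < N, g^[k] x ∈ Icc (L (W k)).1 (L (W k)).2 := by
  intro N
  induction N with
  | zero => exact fun W => ⟨(L (W 0)).1, fun k hk => absurd hk (Nat.not_lt_zero k)⟩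
  | succ N ih =>
    intro W
    rcases Nat.eq_zero_or_pos N with rfl | hN
    · exact ⟨(L (W 0)).1, fun k hk => by
        interval_cases k
        simpa using left_mem_Icc.2 (hL (W 0))⟩
    obtain ⟨y, hy⟩ := ih (fun k => W (k+1))
    have hy0 : y ∈ Icc (L (W 1)).1 (L (W 1)).2 := by simpa using hy 0 hN
    obtain ⟨x, hx, hgx⟩ := hcov (W 0) (W 1) hy0
    refine ⟨x, fun k hk => ?_⟩
    cases k with
    | zero => simpa using hx
    | succ k =>
      rw [Function.iterate_succ_apply, hgx]
      exact hy k (Nat.succ_lt_succ_iff.1 hk)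

open Dynamics Filter UniformSpace in
lemma net_lower {f : ℝ → ℝ} {F : Set ℝ}
    {ι : Type*} [Fintype ι] [Nonempty ι] (L : ι → ℝ × ℝ) {P : ℕ} (hP : 0 < P)
    (hL : ∀ i, (L i).1 ≤ (L i).2)
    (hF : ∀ i, Icc (L i).1 (L i).2 ⊆ F)
    (hδ : ∃ δ > 0, ∀ i j, i ≠ j → ∀ x ∈ Icc (L i).1 (L i).2, ∀ y ∈ Icc (L j).1 (L j).2,
      δ ≤ |x - y|)
    (hcov : ∀ i j, Icc (L j).1 (L j).2 ⊆ f^[P] '' Icc (L i).1 (L i).2) :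
    ((Real.log (Fintype.card ι) / P : ℝ) : EReal) ≤ Dynamics.coverEntropy f F := by
  classical
  obtain ⟨δ, hδ0, hsep⟩ := hδ
  set m := Fintype.card ι with hm
  have hm1 : 1 ≤ m := Fintype.card_pos
  set U : Set (ℝ × ℝ) := {q : ℝ × ℝ | dist q.1 q.2 < δ/2} with hU
  have hUuni : U ∈ uniformity ℝ := Metric.dist_mem_uniformity (by positivity)
  rw [Dynamics.coverEntropy_eq_iSup_netEntropyEntourage f F]
  refine le_iSup₂_of_le U hUuni ?_
  refine le_limsup_of_frequently_le' ?_
  rw [Filter.frequently_atTop]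
  intro M₀
  set N := max 1 M₀ with hN
  have hN1 : 1 ≤ N := le_max_left _ _
  refine ⟨P * N, le_trans (le_max_right _ _) (Nat.le_mul_of_pos_left N hP), ?_⟩
  -- construct the net
  have hcnt : ∀ V : Fin N → ι, ∃ x, ∀ k < N,
      (f^[P])^[k] x ∈ Icc (L (V ⟨k % N, Nat.mod_lt k hN1⟩)).1
        (L (V ⟨k % N, Nat.mod_lt k hN1⟩)).2 :=
    fun V => itinerary hL hcov N _
  choose x hx using hcnt
  have hxmem : ∀ (V : Fin N → ι) (k : Fin N),
      f^[P * k.val] (x V) ∈ Icc (L (V k)).1 (L (V k)).2 := by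
    intro V k
    have := hx V k.val k.isLt
    rw [← Function.iterate_mul] at this
    convert this using 3 <;>
      simp [Fin.ext_iff, Nat.mod_eq_of_lt k.isLt]
  have hsep2 : ∀ V V' : Fin N → ι, V ≠ V' → ∀ z,
      z ∈ ball (x V) (dynEntourage f U (P * N)) →
      z ∈ ball (x V') (dynEntourage f U (P * N)) → False := by
    intro V V' hne z hz hz'
    obtain ⟨k, hk⟩ := Function.ne_iff.1 hne
    have ht : P * k.val < P * N := (Nat.mul_lt_mul_left hP).2 k.isLt
    have d1 := mem_ball_dynEntourage.1 hz (P * k.val) ht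
    have d2 := mem_ball_dynEntourage.1 hz' (P * k.val) ht
    simp only [hU, ball, mem_preimage, mem_setOf_eq] at d1 d2
    have hd := hsep (V k) (V' k) hk _ (hxmem V k) _ (hxmem V' k)
    rw [Real.dist_eq] at d1 d2
    have htri := abs_sub_le (f^[P * k.val] (x V)) (f^[P * k.val] z) (f^[P * k.val] (x V'))
    rw [abs_sub_comm (f^[P * k.val] z) (f^[P * k.val] (x V'))] at htri
    linarith
  have hinj : Function.Injective x := by
    intro V V' h
    by_contra hne
    refine hsep2 V V' hne (x V) ?_ ?_
    · rw [mem_ball_dynEntourage]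
      intro k _
      simp [hU, ball, Real.dist_eq]
      positivity
    · rw [h, mem_ball_dynEntourage]
      intro k _
      simp [hU, ball, Real.dist_eq]
      positivity
  set s : Finset ℝ := Finset.image x Finset.univ with hs
  have hnet : IsDynNetIn f F U (P * N) ↑s := by
    constructor
    · intro z hz
      simp only [hs, Finset.coe_image, Finset.coe_univ, Set.image_univ] at hz
      obtain ⟨V, rfl⟩ := hz
      have := hxmem V ⟨0, hN1⟩
      simp only [Nat.mul_zero, Function.iterate_zero, id_eq] at this
      exact hF _ this
    · intro a ha b hb hab
      simp only [hs, Finset.coe_image, Finset.coe_univ, Set.image_univ, mem_range] at ha hb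
      obtain ⟨V, rfl⟩ := ha
      obtain ⟨V', rfl⟩ := hb
      have hne : V ≠ V' := fun h => hab (by rw [h])
      rw [Function.onFun, Set.disjoint_left]
      exact fun z hz hz' => hsep2 V V' hne z hz hz'
  have hcard : ((m ^ N : ℕ) : ℕ∞) ≤ netMaxcard f F U (P * N) := by
    have h1 := IsDynNetIn.card_le_netMaxcard hnet
    rwa [hs, Finset.card_image_of_injective _ hinj, Finset.card_univ, Fintype.card_fun,
      Fintype.card_fin] at h1
  -- now the EReal computation
  have hlog : ((N : EReal) * (Real.log m : EReal)) ≤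
      ENNReal.log ((netMaxcard f F U (P * N) : ℕ∞) : ℝ≥0∞) := by
    have h3 := ENNReal.log_monotone (ENat.toENNReal_mono hcard)
    refine le_trans (le_of_eq ?_) h3
    have h4 : (((m ^ N : ℕ) : ℕ∞) : ℝ≥0∞) = ((m : ℝ≥0∞)) ^ N := by
      rw [Nat.cast_pow, ENat.toENNReal_pow]
      norm_cast
    rw [h4, ENNReal.log_pow]
    congr 1
    rw [← ENNReal.ofReal_natCast, ENNReal.log_ofReal_of_pos (by exact_mod_cast hm1)]
  have hPN0 : (0 : EReal) ≤ ((P * N : ℕ) : EReal) := Nat.cast_nonneg' _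
  refine le_trans ?_ (EReal.monotone_div_right_of_nonneg hPN0 hlog)
  have e1 : ((N : EReal) * (Real.log m : EReal)) = (((N : ℝ) * Real.log m : ℝ) : EReal) := by
    rw [EReal.coe_mul, EReal.coe_coe_eq_natCast]
  have e2 : ((P * N : ℕ) : EReal) = (((P * N : ℕ) : ℝ) : EReal) :=
    (EReal.coe_coe_eq_natCast _).symm
  have hP' : (0:ℝ) < (P : ℝ) := by exact_mod_cast hP
  have hPN' : (0:ℝ) < ((P * N : ℕ) : ℝ) := by
    have : 0 < P * N := Nat.mul_pos hP (lt_of_lt_of_le Nat.zero_lt_one hN1)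
    exact_mod_cast this
  have hreq : (Real.log m / P : ℝ) = ((N:ℝ) * Real.log m) / (((P*N : ℕ)) : ℝ) := by
    rw [div_eq_div_iff hP'.ne' hPN'.ne']
    push_cast
    ring
  refine le_of_eq ?_
  rw [hreq, EReal.coe_div, ← e1, ← e2]

lemma finite_sep {ι : Type*} [Fintype ι] (L : ι → ℝ × ℝ) (hnd : ∀ i, (L i).1 ≤ (L i).2)
    (hdisj : ∀ i j, i ≠ j → Disjoint (Icc (L i).1 (L i).2) (Icc (L j).1 (L j).2)) :
    ∃ δ > 0, ∀ i j, i ≠ j → ∀ x ∈ Icc (L i).1 (L i).2, ∀ y ∈ Icc (L j).1 (L j).2,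
      δ ≤ |x - y| := by
  classical
  set g : ι × ι → ℝ := fun q => max ((L q.2).1 - (L q.1).2) ((L q.1).1 - (L q.2).2) with hg
  have hgpos : ∀ i j, i ≠ j → 0 < g (i, j) := by
    intro i j hij
    have hdich : (L i).2 < (L j).1 ∨ (L j).2 < (L i).1 := by
      by_contra hcon
      push_neg at hcon
      have hx : max (L i).1 (L j).1 ∈ Icc (L i).1 (L i).2 ∩ Icc (L j).1 (L j).2 := by
        constructor
        · exact ⟨le_max_left _ _, max_le (hnd i) hcon.1⟩
        · exact ⟨le_max_right _ _, max_le hcon.2 (hnd j)⟩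
      exact absurd (hdisj i j hij) (Set.not_disjoint_iff.2 ⟨_, hx.1, hx.2⟩)
    rcases hdich with h | h
    · exact lt_max_of_lt_left (by simpa [hg] using sub_pos.2 h)
    · exact lt_max_of_lt_right (by simpa [hg] using sub_pos.2 h)
  have hgle : ∀ i j, ∀ x ∈ Icc (L i).1 (L i).2, ∀ y ∈ Icc (L j).1 (L j).2,
      g (i, j) ≤ |x - y| := by
    intro i j x hx y hy
    rw [hg]
    refine max_le ?_ ?_
    · calc (L j).1 - (L i).2 ≤ y - x := sub_le_sub hy.1 hx.2
        _ ≤ |x - y| := by rw [abs_sub_comm]; exact le_abs_self _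
    · calc (L i).1 - (L j).2 ≤ x - y := sub_le_sub hx.1 hy.2
        _ ≤ |x - y| := le_abs_self _
  by_cases hpair : (Finset.univ.offDiag : Finset (ι × ι)).Nonempty
  · refine ⟨Finset.inf' _ hpair g, ?_, ?_⟩
    · rw [gt_iff_lt, Finset.lt_inf'_iff]
      rintro ⟨i, j⟩ hijmem
      rw [Finset.mem_offDiag] at hijmem
      exact hgpos i j hijmem.2.2
    · intro i j hij x hx y hy
      refine le_trans (Finset.inf'_le g ?_) (hgle i j x hx y hy)
      exact Finset.mem_offDiag.2 ⟨Finset.mem_univ _, Finset.mem_univ _, hij⟩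
  · refine ⟨1, one_pos, ?_⟩
    intro i j hij
    exact absurd ⟨(i, j), Finset.mem_offDiag.2 ⟨Finset.mem_univ _, Finset.mem_univ _, hij⟩⟩ hpair

open BoundedContinuousFunction

/-- The topological entropy of `f : ℝ → ℝ`, defined as the (Bowen/cover) topological
entropy of `f` on the closure of its image. -/
noncomputable def htop (f : ℝ → ℝ) : EReal :=
  Dynamics.coverEntropy f (closure (Set.range f))

/-- `f` has a `d`-horseshoe: there are `d` nondegenerate compact intervals with pairwise
disjoint interiors, each of whose images under `f` contains all of them. -/
def HasHorseshoe (f : ℝ → ℝ) (d : ℕ) : Prop :=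
  ∃ I : Fin d → ℝ × ℝ,
    (∀ i, (I i).1 < (I i).2) ∧
    (∀ i j, i ≠ j →
      Disjoint (interior (Set.Icc (I i).1 (I i).2)) (interior (Set.Icc (I j).1 (I j).2))) ∧
    (∀ i j, Set.Icc (I j).1 (I j).2 ⊆ f '' Set.Icc (I i).1 (I i).2)

theorem horseshoe_entropy_lower_bound (f : ℝ →ᵇ ℝ) (d : ℕ) (hd : 1 ≤ d)
    (hf : HasHorseshoe f d) :
    (Real.log d : EReal) ≤ htop f := by
  classical
  obtain ⟨I, hI, hdisjI, hcovI⟩ := hf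
  simp only [interior_Icc] at hdisjI
  have key : ∀ n : ℕ,
      ((Real.log d - Real.log 2 / (n+1 : ℕ) : ℝ) : EReal) ≤ htop f := by
    intro n
    obtain ⟨L, hL1, hL2, hL3, hL4⟩ := iter_horseshoe f.continuous hI hdisjI hcovI n
    obtain ⟨S, _, hScard, hSdisj⟩ := select_disjoint L
      (Finset.univ : Finset (Fin (n+1) → Fin d)).card Finset.univ le_rfl
      (fun i _ => hL1 i) (fun i _ j _ hij => hL3 i j hij)
    rw [Finset.card_univ, Fintype.card_fun, Fintype.card_fin, Fintype.card_fin] at hScard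
    have hdpos : 0 < d ^ (n+1) := Nat.pow_pos hd
    have hSpos : 0 < S.card := by omega
    have hSne : S.Nonempty := Finset.card_pos.1 hSpos
    haveI : Nonempty {W : Fin (n+1) → Fin d // W ∈ S} := hSne.to_subtype
    set L' : {W : Fin (n+1) → Fin d // W ∈ S} → ℝ × ℝ := fun W => L W.val with hL'
    have hnd' : ∀ i, (L' i).1 ≤ (L' i).2 := fun i => (hL1 i.val).le
    have hdisj' : ∀ i j : {W // W ∈ S}, i ≠ j →
        Disjoint (Set.Icc (L' i).1 (L' i).2) (Set.Icc (L' j).1 (L' j).2) := by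
      intro i j hij
      exact hSdisj i.val i.property j.val j.property (fun h => hij (Subtype.ext h))
    have hbound := net_lower (F := closure (Set.range ⇑f)) L' (Nat.succ_pos n) hnd'
      (fun i => (hL2 i.val).trans subset_closure)
      (finite_sep L' hnd' hdisj')
      (fun i j => hL4 i.val j.val)
    rw [Fintype.card_coe] at hbound
    refine le_trans ?_ hbound
    rw [EReal.coe_le_coe_iff]
    have hlog2 : Real.log (d ^ (n+1)) ≤ Real.log (2 * S.card) := by
      refine Real.log_le_log (by exact_mod_cast hdpos) ?_
      exact_mod_cast hScard
    rw [Real.log_pow, Real.log_mul two_ne_zero (by exact_mod_cast hSpos.ne')] at hlog2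
    have hn1 : (0:ℝ) < ((n+1 : ℕ) : ℝ) := by exact_mod_cast Nat.succ_pos n
    rw [sub_le_iff_le_add, ← add_div, le_div_iff₀ hn1]
    push_cast at hlog2 ⊢
    linarith [hlog2]
  have htend : Filter.Tendsto
      (fun n : ℕ => ((Real.log d - Real.log 2 / (n+1 : ℕ) : ℝ) : EReal))
      Filter.atTop (nhds ((Real.log d : ℝ) : EReal)) := by
    rw [EReal.tendsto_coe]
    have h1 : Filter.Tendsto (fun n : ℕ => Real.log 2 / ((n+1 : ℕ) : ℝ))
        Filter.atTop (nhds 0) := by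
      have := tendsto_const_div_atTop_nhds_zero_nat (Real.log 2)
      exact this.comp (Filter.tendsto_add_atTop_nat 1)
    simpa using (tendsto_const_nhds.sub h1)
  exact le_of_tendsto' htend key
end

section
/- If B is a linear subspace of the space of bounded continuous functions ℝ → ℝ with dim(B) = n (n ≥ 2), then h_top^+(B) ≥ log(n−1), i.e. there exists f ∈ B with topological entropy h_top(f) ≥ log(n−1). -/
open BoundedContinuousFunction

set_option maxHeartbeats 2000000
set_option synthInstance.maxHeartbeats 1000000

section Aux

open Dynamics Filter
open scoped ENNReal

lemma itinerary_s2 {f : ℝ → ℝ} {d : ℕ} {K : Fin d → Set ℝ}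
    (Kne : ∀ i, (K i).Nonempty) (Kcov : ∀ i j, K j ⊆ f '' K i) :
    ∀ (m : ℕ) (w : ℕ → Fin d), ∃ x, ∀ k ≤ m, f^[k] x ∈ K (w k) := by
  intro m
  induction m with
  | zero =>
    intro w
    obtain ⟨x, hx⟩ := Kne (w 0)
    exact ⟨x, fun k hk => by simp only [Nat.le_zero.mp hk]; simpa using hx⟩
  | succ m ih =>
    intro w
    obtain ⟨y, hy⟩ := ih (fun k => w (k + 1))
    have hy1 : y ∈ K (w 1) := by simpa using hy 0 (Nat.zero_le m)
    obtain ⟨x, hx, hfx⟩ := Kcov (w 0) (w 1) hy1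
    refine ⟨x, fun k hk => ?_⟩
    cases k with
    | zero => simpa using hx
    | succ j =>
      rw [Function.iterate_succ_apply, hfx]
      exact hy j (Nat.succ_le_succ_iff.mp hk)


lemma log_le_htop_of_sep {f : ℝ → ℝ} {d : ℕ} (hd : 1 ≤ d) {K : Fin d → Set ℝ}
    (Kne : ∀ i, (K i).Nonempty) (Kcov : ∀ i j, K j ⊆ f '' K i)
    {ε : ℝ} (hε : 0 < ε)
    (Ksep : ∀ i j, i ≠ j → ∀ x ∈ K i, ∀ y ∈ K j, 2 * ε ≤ |x - y|) :
    (Real.log d : EReal) ≤ htop f := by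
  haveI : Nonempty (Fin d) := ⟨⟨0, hd⟩⟩
  set F := closure (Set.range f) with hF
  set U : Set (ℝ × ℝ) := {p | dist p.1 p.2 < ε} with hUdef
  have hU : U ∈ uniformity ℝ := Metric.dist_mem_uniformity hε
  -- disjointness of the K i
  have Kdisj : ∀ i j, i ≠ j → Disjoint (K i) (K j) := by
    intro i j hij
    rw [Set.disjoint_left]
    intro x hxi hxj
    have := Ksep i j hij x hxi x hxj
    simp at this
    linarith
  -- points with prescribed itineraries, inside F
  have key : ∀ (N : ℕ) (w : Fin N → Fin d), ∃ y, y ∈ F ∧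
      ∀ (k : ℕ) (hk : k < N), f^[k] y ∈ K (w ⟨k, hk⟩) := by
    intro N w
    set wext : ℕ → Fin d := fun k => match k with
      | 0 => Classical.arbitrary _
      | (j+1) => if h : j < N then w ⟨j, h⟩ else Classical.arbitrary _ with hwext
    obtain ⟨x, hx⟩ := itinerary_s2 Kne Kcov N wext
    refine ⟨f x, subset_closure ⟨x, rfl⟩, fun k hk => ?_⟩
    have h1 := hx (k + 1) hk
    rw [← Function.iterate_succ_apply f k x]
    simpa [hwext, hk] using h1
  choose Y hYF hYK using key
  have Yinj : ∀ N, Function.Injective (Y N) := by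
    intro N w w' hww
    by_contra hne
    obtain ⟨k, hk⟩ : ∃ k, w k ≠ w' k := by
      by_contra h
      push_neg at h
      exact hne (funext h)
    have h1 := hYK N w k.1 k.2
    have h2 := hYK N w' k.1 k.2
    rw [hww] at h1
    simp only [Fin.eta] at h1 h2
    exact Set.disjoint_left.mp (Kdisj _ _ hk) h1 h2
  have net : ∀ N, IsDynNetIn f F U N (Finset.image (Y N) Finset.univ : Finset ℝ) := by
    intro N
    constructor
    · intro x hx
      simp only [Finset.coe_image, Finset.coe_univ, Set.image_univ, Set.mem_range] at hx
      obtain ⟨w, rfl⟩ := hx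
      exact hYF N w
    · intro x hx y hy hxy
      simp only [Finset.coe_image, Finset.coe_univ, Set.image_univ, Set.mem_range] at hx hy
      obtain ⟨w, rfl⟩ := hx
      obtain ⟨w', rfl⟩ := hy
      have hww : w ≠ w' := fun h => hxy (by rw [h])
      obtain ⟨k, hk⟩ : ∃ k, w k ≠ w' k := by
        by_contra h
        push_neg at h
        exact hww (funext h)
      simp only [Function.onFun]
      rw [Set.disjoint_left]
      intro z hz1 hz2
      rw [mem_ball_dynEntourage] at hz1 hz2
      have d1 := hz1 k.1 k.2
      have d2 := hz2 k.1 k.2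
      simp only [UniformSpace.ball, Set.mem_preimage, hUdef, Set.mem_setOf_eq] at d1 d2
      have hA := hYK N w k.1 k.2
      have hB := hYK N w' k.1 k.2
      simp only [Fin.eta] at hA hB
      have hsep := Ksep (w k) (w' k) hk _ hA _ hB
      rw [← Real.dist_eq] at hsep
      have : dist (f^[k.1] (Y N w)) (f^[k.1] (Y N w')) < 2 * ε := by
        calc dist (f^[k.1] (Y N w)) (f^[k.1] (Y N w'))
            ≤ dist (f^[k.1] (Y N w)) (f^[k.1] z) + dist (f^[k.1] z) (f^[k.1] (Y N w')) :=
              dist_triangle _ _ _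
          _ < ε + ε := by rw [dist_comm] at d2; linarith
          _ = 2 * ε := by ring
      linarith
  -- cardinality of the nets
  have cardbound : ∀ N, ((d : ℝ≥0∞)) ^ N ≤ ((netMaxcard f F U N : ℝ≥0∞)) := by
    intro N
    have h1 := (net N).card_le_netMaxcard
    have h2 : (Finset.image (Y N) Finset.univ).card = d ^ N := by
      rw [Finset.card_image_of_injective _ (Yinj N), Finset.card_univ]
      simp [Fintype.card_fun]
    rw [h2] at h1
    have := ENat.toENNReal_mono h1
    simpa using this
  -- net entropy lower bound
  have hlog : (Real.log d : EReal) = ENNReal.log (d : ℝ≥0∞) := by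
    rw [← ENNReal.ofReal_natCast, ENNReal.log_ofReal_of_pos]
    exact_mod_cast Nat.lt_of_lt_of_le Nat.zero_lt_one hd
  have hent : (Real.log d : EReal) ≤ netEntropyEntourage f F U := by
    rw [hlog, netEntropyEntourage]
    have : (fun _ : ℕ => ENNReal.log (d : ℝ≥0∞)) ≤ᶠ[atTop]
        fun N : ℕ => ENNReal.log ((netMaxcard f F U N : ℝ≥0∞)) / (N : EReal) := by
      filter_upwards [eventually_ge_atTop 1] with N hN
      rw [EReal.le_div_iff_mul_le (by exact_mod_cast hN) (by exact_mod_cast EReal.natCast_ne_top N)]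
      rw [EReal.mul_comm, ← ENNReal.log_pow]
      exact ENNReal.log_monotone (cardbound N)
    calc (ENNReal.log (d : ℝ≥0∞)) = atTop.limsup (fun _ : ℕ => ENNReal.log (d : ℝ≥0∞)) :=
          (limsup_const _).symm
      _ ≤ _ := limsup_le_limsup this
  exact hent.trans (netEntropyEntourage_le_coverEntropy f F hU)


/-- Evaluation of elements of `B` at the points of `s`, as a linear map. -/
noncomputable def evalMap (B : Submodule ℝ (ℝ →ᵇ ℝ)) (s : Finset ℝ) : B →ₗ[ℝ] (s → ℝ) where
  toFun g := fun x => (g : ℝ →ᵇ ℝ) x.1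
  map_add' g h := by ext x; simp
  map_smul' c g := by ext x; simp

@[simp] lemma evalMap_apply {B : Submodule ℝ (ℝ →ᵇ ℝ)} {s : Finset ℝ} (g : B) (x : s) :
    evalMap B s g x = (g : ℝ →ᵇ ℝ) x.1 := rfl

lemma exists_eval_surj (B : Submodule ℝ (ℝ →ᵇ ℝ)) [FiniteDimensional ℝ B] :
    ∀ k, k ≤ Module.finrank ℝ B → ∃ s : Finset ℝ, s.card = k ∧
      Function.Surjective (evalMap B s) := by
  intro k
  induction k with
  | zero =>
    exact fun _ => ⟨∅, rfl, fun v => ⟨0, funext fun x => (Finset.notMem_empty _ x.2).elim⟩⟩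
  | succ k ih =>
    intro hk
    obtain ⟨s, hcard, hsurj⟩ := ih (le_trans (Nat.le_succ k) hk)
    have h2 : Module.finrank ℝ (↥s → ℝ) = k := by
      rw [Module.finrank_pi, Fintype.card_coe, hcard]
    have hkerbot : LinearMap.ker (evalMap B s) ≠ ⊥ := by
      intro h
      have e := LinearEquiv.ofBijective (evalMap B s) ⟨fun a b hab => by
        have hm : a - b ∈ LinearMap.ker (evalMap B s) := by
          rw [LinearMap.mem_ker]
          funext x
          have := congrFun hab x
          simp only [evalMap_apply] at this ⊢
          simp [this]
        rw [h, Submodule.mem_bot] at hm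
        exact sub_eq_zero.mp hm, hsurj⟩
      have h3 : Module.finrank ℝ ↥B = Module.finrank ℝ (↥s → ℝ) :=
        LinearEquiv.finrank_eq e
      rw [h2] at h3
      omega
    obtain ⟨g, hgker, hg0⟩ := Submodule.exists_mem_ne_zero_of_ne_bot hkerbot
    have hgfun : ∃ p : ℝ, (g : ℝ →ᵇ ℝ) p ≠ 0 := by
      by_contra h
      push_neg at h
      apply hg0
      apply Subtype.ext
      exact BoundedContinuousFunction.ext h
    obtain ⟨p, hp⟩ := hgfun
    have hps : p ∉ s := by
      intro hmem
      have := congrFun (LinearMap.mem_ker.mp hgker) ⟨p, hmem⟩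
      simp at this
      exact hp this
    refine ⟨insert p s, by rw [Finset.card_insert_of_notMem hps, hcard], ?_⟩
    intro v
    obtain ⟨h, hh⟩ := hsurj (fun x => v ⟨x.1, Finset.mem_insert_of_mem x.2⟩)
    set a : ℝ := (v ⟨p, Finset.mem_insert_self p s⟩ - (h : ℝ →ᵇ ℝ) p) / (g : ℝ →ᵇ ℝ) p with ha
    refine ⟨h + a • g, funext fun x => ?_⟩
    rcases Finset.mem_insert.mp x.2 with hx | hx
    · have hxp : x = ⟨p, Finset.mem_insert_self p s⟩ := Subtype.ext hx
      subst hxp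
      simp only [evalMap_apply, Submodule.coe_add, Submodule.coe_smul,
        BoundedContinuousFunction.add_apply, BoundedContinuousFunction.smul_apply]
      rw [ha]
      rw [smul_eq_mul]
      field_simp
      ring
    · have hgx : (g : ℝ →ᵇ ℝ) x.1 = 0 := by
        have := congrFun (LinearMap.mem_ker.mp hgker) ⟨x.1, hx⟩
        simpa using this
      have hhx := congrFun hh ⟨x.1, hx⟩
      simp only [evalMap_apply] at hhx
      simp only [evalMap_apply, Submodule.coe_add, Submodule.coe_smul,
        BoundedContinuousFunction.add_apply, BoundedContinuousFunction.smul_apply, hgx,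
        smul_eq_mul, mul_zero, add_zero]
      rw [hhx]


lemma interval_select {f : ℝ → ℝ} (hf : Continuous f) {p q C C' : ℝ}
    (hpq : p < q) (hC' : 0 < C') (hCC' : C' < C)
    (hcase : (f p = C ∧ f q = -C) ∨ (f p = -C ∧ f q = C)) :
    ∃ a b, p < a ∧ a < b ∧ b < q ∧ Set.Icc (-C') C' ⊆ f '' Set.Icc a b := by
  rcases hcase with ⟨hp, hq⟩ | ⟨hp, hq⟩
  · have h1 : C' ∈ Set.Icc (f q) (f p) := by rw [hp, hq]; constructor <;> linarith
    obtain ⟨a, haI, hfa⟩ := intermediate_value_Icc' hpq.le hf.continuousOn h1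
    have hap : p < a := lt_of_le_of_ne haI.1 (fun h => by rw [← h, hp] at hfa; linarith)
    have haq : a < q := lt_of_le_of_ne haI.2 (fun h => by rw [h, hq] at hfa; linarith)
    have h2 : -C' ∈ Set.Icc (f q) (f a) := by rw [hfa, hq]; constructor <;> linarith
    obtain ⟨b, hbI, hfb⟩ := intermediate_value_Icc' haq.le hf.continuousOn h2
    have hab : a < b := lt_of_le_of_ne hbI.1 (fun h => by rw [← h, hfa] at hfb; linarith)
    have hbq : b < q := lt_of_le_of_ne hbI.2 (fun h => by rw [h, hq] at hfb; linarith)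
    refine ⟨a, b, hap, hab, hbq, ?_⟩
    have := intermediate_value_Icc' hab.le hf.continuousOn
    rw [hfa, hfb] at this
    exact this
  · have h1 : -C' ∈ Set.Icc (f p) (f q) := by rw [hp, hq]; constructor <;> linarith
    obtain ⟨a, haI, hfa⟩ := intermediate_value_Icc hpq.le hf.continuousOn h1
    have hap : p < a := lt_of_le_of_ne haI.1 (fun h => by rw [← h, hp] at hfa; linarith)
    have haq : a < q := lt_of_le_of_ne haI.2 (fun h => by rw [h, hq] at hfa; linarith)
    have h2 : C' ∈ Set.Icc (f a) (f q) := by rw [hfa, hq]; constructor <;> linarith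
    obtain ⟨b, hbI, hfb⟩ := intermediate_value_Icc haq.le hf.continuousOn h2
    have hab : a < b := lt_of_le_of_ne hbI.1 (fun h => by rw [← h, hfa] at hfb; linarith)
    have hbq : b < q := lt_of_le_of_ne hbI.2 (fun h => by rw [h, hq] at hfb; linarith)
    refine ⟨a, b, hap, hab, hbq, ?_⟩
    have := intermediate_value_Icc hab.le hf.continuousOn
    rw [hfa, hfb] at this
    exact this


end Aux

theorem finite_dim_entropy_sup_lower_bound (n : ℕ) (hn : 2 ≤ n)
    (B : Submodule ℝ (ℝ →ᵇ ℝ)) (hB : Module.finrank ℝ B = n) :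
    ∃ f ∈ B, (Real.log ((n : ℝ) - 1) : EReal) ≤ htop f := by
  haveI : FiniteDimensional ℝ B := FiniteDimensional.of_finrank_pos (by omega)
  obtain ⟨d, hd1, rfl⟩ : ∃ d, 1 ≤ d ∧ n = d + 1 := ⟨n - 1, by omega, by omega⟩
  obtain ⟨s, hcard, hsurj⟩ := exists_eval_surj B (d + 1) (le_of_eq hB.symm)
  set e := s.orderIsoOfFin hcard with he
  set t : Fin (d + 1) → ℝ := fun i => (e i : ℝ) with ht
  have tmono : StrictMono t := fun i j hij => by
    simpa [ht] using (Subtype.coe_lt_coe.mpr (e.lt_iff_lt.mpr hij))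
  set C' : ℝ := |t 0| + |t (Fin.last d)| + 1 with hC'
  have hC'pos : 0 < C' := by positivity
  set C : ℝ := C' + 1 with hC
  obtain ⟨g, hg⟩ := hsurj (fun x => (-1 : ℝ) ^ ((e.symm x : Fin (d+1)) : ℕ) * C)
  set f : ℝ →ᵇ ℝ := (g : ℝ →ᵇ ℝ) with hf
  have hft : ∀ i : Fin (d + 1), f (t i) = (-1 : ℝ) ^ (i : ℕ) * C := by
    intro i
    have h1 := congrFun hg (e i)
    simpa [evalMap_apply, ht] using h1
  -- interval selection
  have hsel : ∀ i : Fin d, ∃ a b, t i.castSucc < a ∧ a < b ∧ b < t i.succ ∧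
      Set.Icc (-C') C' ⊆ f '' Set.Icc a b := by
    intro i
    apply interval_select f.continuous (tmono (Fin.castSucc_lt_succ (i := i))) hC'pos
      (show C' < C by rw [hC]; linarith)
    have h1 : f (t i.castSucc) = (-1 : ℝ) ^ (i : ℕ) * C := by
      simpa [Fin.coe_castSucc] using hft i.castSucc
    have h2 : f (t i.succ) = (-1 : ℝ) ^ ((i : ℕ) + 1) * C := by
      simpa [Fin.val_succ] using hft i.succ
    rcases Nat.even_or_odd (i : ℕ) with hev | hod
    · left
      constructor
      · rw [h1, hev.neg_one_pow, one_mul]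
      · rw [h2, (hev.add_one).neg_one_pow, neg_one_mul]
    · right
      constructor
      · rw [h1, hod.neg_one_pow, neg_one_mul]
      · rw [h2, (hod.add_one).neg_one_pow, one_mul]
  choose a b ha hab hb him using hsel
  set K : Fin d → Set ℝ := fun i => Set.Icc (a i) (b i) with hK
  have Kne : ∀ i, (K i).Nonempty := fun i => Set.nonempty_Icc.mpr (hab i).le
  have Ksub : ∀ j, K j ⊆ Set.Icc (-C') C' := by
    intro j x hx
    have h1 : t 0 ≤ t j.castSucc := tmono.monotone (Fin.zero_le _)
    have h2 : t j.succ ≤ t (Fin.last d) := tmono.monotone (Fin.le_last _)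
    have h3 := neg_abs_le (t 0)
    have h4 := le_abs_self (t (Fin.last d))
    have h5 := abs_nonneg (t 0)
    have h6 := abs_nonneg (t (Fin.last d))
    have hxa := hx.1
    have hxb := hx.2
    have hja := ha j
    have hjb := hb j
    constructor
    · rw [hC']; linarith
    · rw [hC']; linarith
  have Kcov : ∀ i j, K j ⊆ f '' K i := fun i j => (Ksub j).trans (him i)
  -- separation constant
  have hne : (Finset.univ : Finset (Fin d)).Nonempty := ⟨⟨0, hd1⟩, Finset.mem_univ _⟩
  set m : ℝ := Finset.univ.inf' hne
      (fun i => min (a i - t i.castSucc) (t i.succ - b i)) with hm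
  have hmpos : 0 < m := by
    rw [hm, Finset.lt_inf'_iff]
    intro i _
    exact lt_min (by linarith [ha i]) (by linarith [hb i])
  have hmle1 : ∀ i : Fin d, m ≤ a i - t i.castSucc := fun i =>
    (Finset.inf'_le _ (Finset.mem_univ i)).trans (min_le_left _ _)
  have hmle2 : ∀ i : Fin d, m ≤ t i.succ - b i := fun i =>
    (Finset.inf'_le _ (Finset.mem_univ i)).trans (min_le_right _ _)
  have Kseplt : ∀ i j : Fin d, i < j → ∀ x ∈ K i, ∀ y ∈ K j, 2 * m ≤ |x - y| := by
    intro i j hij x hx y hy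
    have h1 : t i.succ ≤ t j.castSucc := tmono.monotone (Fin.succ_le_castSucc_iff.mpr hij)
    have h2 := hmle1 j
    have h3 := hmle2 i
    have hxb : x ≤ b i := hx.2
    have hya : a j ≤ y := hy.1
    have : 2 * m ≤ y - x := by linarith
    calc 2 * m ≤ y - x := this
      _ ≤ |y - x| := le_abs_self _
      _ = |x - y| := abs_sub_comm _ _
  have Ksep : ∀ i j : Fin d, i ≠ j → ∀ x ∈ K i, ∀ y ∈ K j, 2 * m ≤ |x - y| := by
    intro i j hij x hx y hy
    rcases lt_or_gt_of_ne hij with h | h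
    · exact Kseplt i j h x hx y hy
    · rw [abs_sub_comm]
      exact Kseplt j i h y hy x hx
  have hmain := log_le_htop_of_sep hd1 Kne Kcov hmpos Ksep
  refine ⟨f, g.2, ?_⟩
  have hcast : ((d + 1 : ℕ) : ℝ) - 1 = (d : ℝ) := by push_cast; ring
  rw [hcast]
  exact hmain
end

section
/- Let Φ : ℓ¹ → C([0,1]) be an isometric linear embedding of ℓ¹ (the Banach space of real sequences summable in absolute value with the 1-norm) into C([0,1]) (continuous real-valued functions on [0,1] with the supremum norm), and let f_i = Φ(e_i) where e_i is the i-th standard unit vector of ℓ¹. Then for every sign sequence s = (s_i)_{i∈ℕ} ∈ {−1, +1}^ℕ there exists a point x ∈ [0,1] such that either f_i(x) = s_i for all i ∈ ℕ, or f_i(x) = −s_i for all i ∈ ℕ. -/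
theorem exists_point_sign_agreement_of_isometry
    (Φ : lp (fun _ : ℕ => ℝ) 1 →ₗᵢ[ℝ] C(↥(Set.Icc (0 : ℝ) 1), ℝ))
    (s : ℕ → ℝ) (hs : ∀ i, s i = 1 ∨ s i = -1) :
    ∃ x : ↥(Set.Icc (0 : ℝ) 1),
      (∀ i : ℕ, Φ (lp.single 1 i (1 : ℝ)) x = s i) ∨
      (∀ i : ℕ, Φ (lp.single 1 i (1 : ℝ)) x = -(s i)) := by
  classical
  have habs : ∀ i, |s i| = 1 := by intro i; rcases hs i with h | h <;> simp [h]
  have hsne : ∀ i, s i ≠ 0 := by intro i; rcases hs i with h | h <;> simp [h]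
  have hss : ∀ i, s i * s i = 1 := by intro i; rcases hs i with h | h <;> simp [h]
  set f : ℕ → C(↥(Set.Icc (0 : ℝ) 1), ℝ) := fun i => Φ (lp.single 1 i (1 : ℝ)) with hfdef
  have hone : (0 : ℝ) < (1 : ENNReal).toReal := by simp
  have hfn : ∀ i, ‖f i‖ = 1 := by
    intro i
    have := lp.norm_single (E := fun _ : ℕ => ℝ) (p := 1) one_pos i (1 : ℝ)
    simp only [hfdef, Φ.norm_map, this, norm_one]
  have hfb : ∀ i x, |f i x| ≤ 1 := by
    intro i x
    calc |f i x| = ‖f i x‖ := rfl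
      _ ≤ ‖f i‖ := ContinuousMap.norm_coe_le_norm _ _
      _ = 1 := hfn i
  set g : ℕ → C(↥(Set.Icc (0 : ℝ) 1), ℝ) :=
    fun n => Φ (∑ i ∈ Finset.range n, lp.single 1 i (s i)) with hgdef
  have hgnorm : ∀ n, ‖g n‖ = n := by
    intro n
    have h := lp.norm_sum_single (E := fun _ : ℕ => ℝ) hone s (Finset.range n)
    simp only [ENNReal.toReal_one, Real.rpow_one, Real.norm_eq_abs] at h
    rw [hgdef]
    simp only [Φ.norm_map, h]
    simp [habs]
  have hgx : ∀ n x, g n x = ∑ i ∈ Finset.range n, s i * f i x := by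
    intro n x
    have h1 : (∑ i ∈ Finset.range n, lp.single 1 i (s i))
        = ∑ i ∈ Finset.range n, s i • lp.single 1 i (1 : ℝ) := by
      refine Finset.sum_congr rfl fun i _ => ?_
      rw [← lp.single_smul]
      norm_num
    rw [hgdef]
    simp only [h1, map_sum, map_smul, hfdef]
    simp [smul_eq_mul]
  have hmax : ∀ n : ℕ, ∃ x, |g n x| = n := by
    intro n
    obtain ⟨x, -, hx⟩ := isCompact_univ.exists_isMaxOn Set.univ_nonempty
      ((map_continuous (g n)).abs.continuousOn)
    refine ⟨x, le_antisymm ?_ ?_⟩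
    · calc |g n x| ≤ ‖g n‖ := (g n).norm_coe_le_norm x
        _ = n := hgnorm n
    · rw [← hgnorm n]
      refine ((g n).norm_le (abs_nonneg _)).2 fun y => ?_
      exact hx (Set.mem_univ y)
  have key : ∀ (n : ℕ) (a : ℕ → ℝ), (∀ i, |a i| ≤ 1) →
      |∑ i ∈ Finset.range n, a i| = n →
      (∀ i < n, a i = 1) ∨ (∀ i < n, a i = -1) := by
    intro n a hb hsum
    rcases abs_cases (∑ i ∈ Finset.range n, a i) with ⟨h1, _⟩ | ⟨h1, _⟩
    · left
      intro i hi
      have h0 : ∑ j ∈ Finset.range n, (1 - a j) = 0 := by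
        rw [Finset.sum_sub_distrib, Finset.sum_const, Finset.card_range]
        rw [h1] at hsum
        simp [hsum]
      have := (Finset.sum_eq_zero_iff_of_nonneg
        (fun j _ => by linarith [(abs_le.1 (hb j)).2])).mp h0 i (Finset.mem_range.2 hi)
      linarith
    · right
      intro i hi
      have h0 : ∑ j ∈ Finset.range n, (1 + a j) = 0 := by
        rw [Finset.sum_add_distrib, Finset.sum_const, Finset.card_range]
        have : ∑ j ∈ Finset.range n, a j = -(n : ℝ) := by linarith [hsum]
        simp [this]
      have := (Finset.sum_eq_zero_iff_of_nonneg
        (fun j _ => by linarith [(abs_le.1 (hb j)).1])).mp h0 i (Finset.mem_range.2 hi)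
      linarith
  set K : ℕ → Set ↥(Set.Icc (0 : ℝ) 1) :=
    fun n => {x | ∀ i < n, f i x = s i} ∪ {x | ∀ i < n, f i x = -s i} with hK
  have hcl : ∀ (c : ℕ → ℝ) (n : ℕ), IsClosed {x | ∀ i < n, f i x = c i} := by
    intro c n
    have he : {x | ∀ i < n, f i x = c i} = ⋂ i ∈ Set.Iio n, (fun x => f i x) ⁻¹' {c i} := by
      ext x; simp [Set.mem_iInter]
    rw [he]
    exact isClosed_biInter fun i _ => isClosed_singleton.preimage (map_continuous (f i))
  have hKcl : ∀ n, IsClosed (K n) := fun n => (hcl s n).union (hcl (fun i => -s i) n)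
  have hKne : ∀ n, (K n).Nonempty := by
    intro n
    obtain ⟨x, hx⟩ := hmax n
    rw [hgx n x] at hx
    have hb : ∀ i, |s i * f i x| ≤ 1 := by
      intro i
      rw [abs_mul, habs i, one_mul]
      exact hfb i x
    rcases key n (fun i => s i * f i x) hb hx with h | h
    · refine ⟨x, Or.inl fun i hi => ?_⟩
      have := h i hi
      have h2 : s i * (s i * f i x) = s i * 1 := by rw [this]
      rwa [← mul_assoc, hss i, one_mul, mul_one] at h2
    · refine ⟨x, Or.inr fun i hi => ?_⟩
      have := h i hi
      have h2 : s i * (s i * f i x) = s i * (-1) := by rw [this]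
      rwa [← mul_assoc, hss i, one_mul, mul_neg_one] at h2
  have hKsub : ∀ n, K (n + 1) ⊆ K n := by
    intro n x hx
    rcases hx with h | h
    · exact Or.inl fun i hi => h i (Nat.lt_succ_of_lt hi)
    · exact Or.inr fun i hi => h i (Nat.lt_succ_of_lt hi)
  obtain ⟨x, hx⟩ := IsCompact.nonempty_iInter_of_sequence_nonempty_isCompact_isClosed K
    hKsub hKne ((hKcl 0).isCompact) hKcl
  have hxn : ∀ n, x ∈ K n := fun n => Set.mem_iInter.mp hx n
  rcases hxn 1 with h1 | h1
  · refine ⟨x, Or.inl fun i => ?_⟩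
    rcases hxn (i + 1) with h | h
    · exact h i (Nat.lt_succ_self i)
    · exfalso
      have e1 : f 0 x = s 0 := h1 0 Nat.one_pos
      have e2 : f 0 x = -s 0 := h 0 (Nat.succ_pos i)
      rw [e1] at e2
      exact hsne 0 (by linarith)
  · refine ⟨x, Or.inr fun i => ?_⟩
    rcases hxn (i + 1) with h | h
    · exfalso
      have e1 : f 0 x = -s 0 := h1 0 Nat.one_pos
      have e2 : f 0 x = s 0 := h 0 (Nat.succ_pos i)
      rw [e1] at e2
      exact hsne 0 (by linarith)
    · exact h i (Nat.lt_succ_self i)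
end

section
/- For n ≥ 2 let A_n be the n×n real matrix with entries a_{ij} = (−1)^i for 1 ≤ j < i and a_{ij} = (−1)^{i+1} for i ≤ j ≤ n. Then for every β = (β_1, …, β_n) ∈ ℝⁿ the linear equation A_n α = β has a unique solution α, given by α_i = (β_i + β_{i+1}) / ((−1)^{i+1}·2) for i = 1, …, n−1 and α_n = (β_1 + (−1)^{n+1} β_n)/2. In particular max_i |α_i| ≤ max_i |β_i|. -/
/-- The matrix `A_n` (indexed from `0`, corresponding to the paper's `1`-based indexing:
`a_{ij} = (-1)^i` for `j < i` and `a_{ij} = (-1)^{i+1}` for `i ≤ j`). -/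
def paperMatrix (n : ℕ) : Matrix (Fin n) (Fin n) ℝ :=
  Matrix.of fun i j => if (j : ℕ) < (i : ℕ) then (-1 : ℝ) ^ ((i : ℕ) + 1) else (-1) ^ (i : ℕ)

lemma paperKey1 {n : ℕ} (α : Fin n → ℝ) (i : Fin n) (h : (i : ℕ) + 1 < n) :
    (paperMatrix n).mulVec α i + (paperMatrix n).mulVec α ⟨(i : ℕ) + 1, h⟩
      = (-1) ^ (i : ℕ) * 2 * α i := by
  simp only [Matrix.mulVec, dotProduct, paperMatrix, Matrix.of_apply]
  rw [← Finset.sum_add_distrib, Finset.sum_eq_single i]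
  · rw [if_neg (lt_irrefl _), if_pos (Nat.lt_succ_self _)]
    ring
  · intro j _ hj
    have hji : (j : ℕ) ≠ (i : ℕ) := fun hc => hj (Fin.ext hc)
    rcases hji.lt_or_gt with hl | hl
    · rw [if_pos hl, if_pos (by omega : (j : ℕ) < (i : ℕ) + 1)]
      ring
    · rw [if_neg (by omega), if_neg (by omega)]
      ring
  · intro hi; exact absurd (Finset.mem_univ i) hi

lemma paperKey2 {n : ℕ} (hn : 2 ≤ n) (α : Fin n → ℝ) :
    (paperMatrix n).mulVec α ⟨0, Nat.lt_of_lt_of_le two_pos hn⟩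
      + (-1) ^ (n + 1) * (paperMatrix n).mulVec α
          ⟨n - 1, Nat.sub_lt (Nat.lt_of_lt_of_le two_pos hn) Nat.one_pos⟩
      = 2 * α ⟨n - 1, Nat.sub_lt (Nat.lt_of_lt_of_le two_pos hn) Nat.one_pos⟩ := by
  obtain ⟨m, rfl⟩ : ∃ m, n = m + 2 := ⟨n - 2, by omega⟩
  simp only [Matrix.mulVec, dotProduct, paperMatrix, Matrix.of_apply,
    show m + 2 - 1 = m + 1 from rfl, Fin.val_mk]
  rw [Finset.mul_sum, ← Finset.sum_add_distrib,
    Finset.sum_eq_single (⟨m + 1, by omega⟩ : Fin (m + 2))]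
  · rw [if_neg (by omega : ¬ m + 1 < 0), if_neg (lt_irrefl (m+1))]
    have h1 : ((-1 : ℝ)) ^ (m + 2 + 1) * (-1) ^ (m + 1) = 1 := by
      rw [← pow_add]
      exact Even.neg_one_pow ⟨m + 2, by ring⟩
    rw [pow_zero, ← mul_assoc, h1]
    ring
  · intro j _ hj
    have hji : (j : ℕ) ≠ m + 1 := fun hc => hj (Fin.ext hc)
    have hjl : (j : ℕ) < m + 1 := by omega
    rw [if_neg (by omega : ¬ (j:ℕ) < 0), if_pos hjl, pow_zero]
    have h1 : ((-1 : ℝ)) ^ (m + 2 + 1) * (-1) ^ (m + 1 + 1) = -1 := by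
      rw [← pow_add]
      exact Odd.neg_one_pow ⟨m + 2, by ring⟩
    rw [← mul_assoc, h1]
    ring
  · intro hi; exact absurd (Finset.mem_univ _) hi

lemma paperZero {n : ℕ} (hn : 2 ≤ n) (α : Fin n → ℝ)
    (hα : (paperMatrix n).mulVec α = 0) : α = 0 := by
  funext i
  by_cases hi : (i : ℕ) + 1 < n
  · have h := paperKey1 α i hi
    rw [hα] at h
    simp only [Pi.zero_apply, add_zero] at h
    have h2 : ((-1 : ℝ)) ^ (i : ℕ) ≠ 0 := pow_ne_zero _ (by norm_num)
    rcases Nat.even_or_odd (i : ℕ) with he | he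
    · rw [he.neg_one_pow] at h; simpa using by linarith
    · rw [he.neg_one_pow] at h; simpa using by linarith
  · have hlt := i.isLt
    have hieq : i = ⟨n - 1, by omega⟩ := by
      apply Fin.ext; simp only [Fin.val_mk]; omega
    have h := paperKey2 hn α
    rw [hα] at h
    simp only [Pi.zero_apply, mul_zero, add_zero] at h
    rw [hieq]
    simpa using by linarith

set_option maxHeartbeats 1000000 in
theorem paperMatrix_unique_solution (n : ℕ) (hn : 2 ≤ n) (β : Fin n → ℝ) :
    (∃! α : Fin n → ℝ, (paperMatrix n).mulVec α = β) ∧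
    ∀ α : Fin n → ℝ, (paperMatrix n).mulVec α = β →
      (∀ i : Fin n, ∀ h : (i : ℕ) + 1 < n,
          α i = (β i + β ⟨(i : ℕ) + 1, h⟩) / ((-1) ^ (i : ℕ) * 2)) ∧
      α ⟨n - 1, by omega⟩ =
        (β ⟨0, by omega⟩ + (-1) ^ (n + 1) * β ⟨n - 1, by omega⟩) / 2 ∧
      (⨆ i, |α i|) ≤ ⨆ i, |β i| := by
  have hinj : Function.Injective ((paperMatrix n).mulVecLin) := by
    rw [← LinearMap.ker_eq_bot, LinearMap.ker_eq_bot']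
    intro α hα
    exact paperZero hn α hα
  have hsurj : Function.Surjective ((paperMatrix n).mulVecLin) :=
    LinearMap.injective_iff_surjective.mp hinj
  constructor
  · obtain ⟨α, hα⟩ := hsurj β
    exact ⟨α, hα, fun γ hγ => hinj (hγ.trans hα.symm)⟩
  · intro α hα
    have hf1 : ∀ i : Fin n, ∀ h : (i : ℕ) + 1 < n,
        α i = (β i + β ⟨(i : ℕ) + 1, h⟩) / ((-1) ^ (i : ℕ) * 2) := by
      intro i h
      have hk := paperKey1 α i h
      rw [hα] at hk
      have hne : ((-1 : ℝ)) ^ (i : ℕ) * 2 ≠ 0 :=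
        mul_ne_zero (pow_ne_zero _ (by norm_num)) two_ne_zero
      rw [eq_div_iff hne]
      linear_combination -hk
    have hf2 : α ⟨n - 1, by omega⟩ =
        (β ⟨0, by omega⟩ + (-1) ^ (n + 1) * β ⟨n - 1, by omega⟩) / 2 := by
      have hk := paperKey2 hn α
      rw [hα] at hk
      rw [eq_div_iff (two_ne_zero)]
      linear_combination -hk
    refine ⟨hf1, hf2, ?_⟩
    have hne : Nonempty (Fin n) := ⟨⟨0, by omega⟩⟩
    have hbdd : BddAbove (Set.range fun i => |β i|) :=
      Set.Finite.bddAbove (Set.finite_range _)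
    have hM : ∀ j, |β j| ≤ ⨆ i, |β i| := fun j => le_ciSup hbdd j
    apply ciSup_le
    intro i
    by_cases hi : (i : ℕ) + 1 < n
    · rw [hf1 i hi, abs_div, abs_mul, abs_pow, abs_neg, abs_one, one_pow, one_mul, abs_two,
        div_le_iff₀ (by norm_num : (0:ℝ) < 2)]
      have h1 := abs_add_le (β i) (β ⟨(i : ℕ) + 1, hi⟩)
      have h2 := hM i
      have h3 := hM ⟨(i : ℕ) + 1, hi⟩
      linarith
    · have hlt := i.isLt
      have hieq : i = ⟨n - 1, by omega⟩ := by
        apply Fin.ext; simp only [Fin.val_mk]; omega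
      rw [hieq, hf2, abs_div, abs_two, div_le_iff₀ (by norm_num : (0:ℝ) < 2)]
      have h1 := abs_add_le (β ⟨0, by omega⟩) ((-1) ^ (n + 1) * β ⟨n - 1, by omega⟩)
      have habs : |(-1 : ℝ) ^ (n + 1) * β ⟨n - 1, by omega⟩| = |β ⟨n - 1, by omega⟩| := by
        rw [abs_mul, abs_pow, abs_neg, abs_one, one_pow, one_mul]
      have h2 := hM ⟨0, by omega⟩
      have h3 := hM ⟨n - 1, by omega⟩
      linarith [h1, habs]
end

section
/- There exists a linear isometric embedding Ψ of C([0,1]) (continuous real-valued functions on [0,1] with the supremum norm) into the Banach space of bounded continuous functions ℝ → ℝ (with the supremum norm) such that for every nonzero f ∈ C([0,1]) the image g = Ψ(f) has infinite topological entropy, h_top(g) = ∞. -/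
open Set Real BoundedContinuousFunction

noncomputable section

namespace InfEnt


/-- block scale -/
def sB (n : ℕ) : ℝ := (4:ℝ)⁻¹ ^ (n+1)
/-- block amplitude -/
def aB (n : ℕ) : ℝ := (2:ℝ)⁻¹ ^ (n+1)

lemma sB_pos (n : ℕ) : 0 < sB n := by unfold sB; positivity
lemma aB_pos (n : ℕ) : 0 < aB n := by unfold aB; positivity
lemma aB_le_one (n : ℕ) : aB n ≤ 1 := by
  unfold aB
  calc (2:ℝ)⁻¹ ^ (n+1) ≤ 1 ^ (n+1) := by gcongr; norm_num
  _ = 1 := one_pow _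

lemma two_sB_le_half (n : ℕ) : 2 * sB n ≤ 1/2 := by
  unfold sB
  have : (4:ℝ)⁻¹ ^ (n+1) ≤ (4:ℝ)⁻¹ ^ 1 := by
    apply pow_le_pow_of_le_one (by norm_num) (by norm_num) (by omega)
  nlinarith

lemma blocks_disjoint {m n : ℕ} (h : m < n) : 2 * sB n < sB m := by
  unfold sB
  have : (4:ℝ)⁻¹ ^ (n+1) ≤ (4:ℝ)⁻¹ ^ (m+2) := by
    apply pow_le_pow_of_le_one (by norm_num) (by norm_num) (by omega)
  have h2 : (4:ℝ)⁻¹ ^ (m+2) = (4:ℝ)⁻¹ ^ (m+1) * 4⁻¹ := by ring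
  nlinarith [pow_pos (show (0:ℝ) < 4⁻¹ by norm_num) (m+1)]

def clamp01 (t : ℝ) : ℝ := max 0 (min 1 t)

lemma continuous_clamp01 : Continuous clamp01 :=
  continuous_const.max (continuous_const.min continuous_id)

lemma clamp01_of_nonpos {t : ℝ} (h : t ≤ 0) : clamp01 t = 0 := by
  unfold clamp01
  rw [min_eq_right (by linarith), max_eq_left h]

lemma clamp01_of_one_le {t : ℝ} (h : 1 ≤ t) : clamp01 t = 1 := by
  unfold clamp01
  rw [min_eq_left h, max_eq_right zero_le_one]

lemma clamp01_of_mem {t : ℝ} (h0 : 0 ≤ t) (h1 : t ≤ 1) : clamp01 t = t := by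
  unfold clamp01
  rw [min_eq_right h1, max_eq_right h0]

/-- the oscillating bump of block `n` -/
def phiFun (n : ℕ) (x : ℝ) : ℝ :=
  aB n * max 0 (Real.sin (2 * π * n * clamp01 ((|x| - sB n) / sB n)))

lemma phiFun_continuous (n : ℕ) : Continuous (phiFun n) := by
  apply continuous_const.mul
  apply continuous_const.max
  apply Real.continuous_sin.comp
  apply continuous_const.mul
  exact continuous_clamp01.comp (((continuous_abs).sub continuous_const).div_const _)

lemma phiFun_nonneg (n : ℕ) (x : ℝ) : 0 ≤ phiFun n x :=
  mul_nonneg (aB_pos n).le (le_max_left _ _)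

lemma phiFun_le (n : ℕ) (x : ℝ) : phiFun n x ≤ aB n := by
  unfold phiFun
  have : max 0 (Real.sin (2 * π * n * clamp01 ((|x| - sB n) / sB n))) ≤ 1 :=
    max_le zero_le_one (Real.sin_le_one _)
  nlinarith [aB_pos n]

lemma abs_phiFun_le (n : ℕ) (x : ℝ) : |phiFun n x| ≤ aB n := by
  rw [abs_of_nonneg (phiFun_nonneg n x)]; exact phiFun_le n x

lemma phiFun_even (n : ℕ) (x : ℝ) : phiFun n (-x) = phiFun n x := by
  unfold phiFun; rw [abs_neg]

lemma phiFun_eq_zero_of_le {n : ℕ} {x : ℝ} (h : |x| ≤ sB n) : phiFun n x = 0 := by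
  unfold phiFun
  rw [clamp01_of_nonpos (by
    apply div_nonpos_of_nonpos_of_nonneg (by linarith) (sB_pos n).le)]
  simp

lemma phiFun_eq_zero_of_ge {n : ℕ} {x : ℝ} (h : 2 * sB n ≤ |x|) : phiFun n x = 0 := by
  unfold phiFun
  rw [clamp01_of_one_le (by
    rw [le_div_iff₀ (sB_pos n)]; linarith)]
  have : Real.sin (2 * π * n * 1) = 0 := by
    have := Real.sin_int_mul_pi (2 * n)
    push_cast at this ⊢
    rw [show 2 * π * (n:ℝ) * 1 = 2 * (n:ℝ) * π by ring]
    exact this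
  rw [this]
  simp

lemma phiFun_support {n : ℕ} {x : ℝ} (h : phiFun n x ≠ 0) : sB n < |x| ∧ |x| < 2 * sB n := by
  constructor
  · by_contra h'
    exact h (phiFun_eq_zero_of_le (not_lt.1 h'))
  · by_contra h'
    exact h (phiFun_eq_zero_of_ge (not_lt.1 h'))

/-- left endpoint of tooth `i` in block `n` -/
def zpt (n i : ℕ) : ℝ := sB n * (1 + i / n)
/-- peak point of tooth `i` in block `n` -/
def ppt (n i : ℕ) : ℝ := sB n * (1 + i / n + 1 / (4 * n))

lemma zpt_lt_ppt {n i : ℕ} (hn : 0 < n) : zpt n i < ppt n i := by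
  unfold zpt ppt
  have h4 : (0:ℝ) < 4 * n := by positivity
  have := sB_pos n
  have : (0:ℝ) < 1 / (4 * n) := by positivity
  nlinarith [sB_pos n]

lemma sB_le_zpt {n : ℕ} (i : ℕ) : sB n ≤ zpt n i := by
  unfold zpt
  nlinarith [sB_pos n, Nat.cast_nonneg (α := ℝ) i, Nat.cast_nonneg (α := ℝ) n,
    div_nonneg (Nat.cast_nonneg (α := ℝ) i) (Nat.cast_nonneg (α := ℝ) n)]

lemma ppt_lt_two_sB {n i : ℕ} (hi : i < n) : ppt n i < 2 * sB n := by
  unfold ppt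
  have hn : (0:ℝ) < n := by exact_mod_cast Nat.pos_of_ne_zero (by omega)
  have hin : (i:ℝ) ≤ n - 1 := by
    have : (i:ℝ) + 1 ≤ n := by exact_mod_cast hi
    linarith
  have h1 : (i:ℝ)/n ≤ 1 - 1/n := by
    rw [div_le_iff₀ hn]; field_simp; linarith
  have h2 : 1/(4*(n:ℝ)) < 1/n := by
    rw [div_lt_div_iff₀ (by positivity) hn]; nlinarith
  nlinarith [sB_pos n]

lemma zpt_pos {n : ℕ} (i : ℕ) : 0 < zpt n i := lt_of_lt_of_le (sB_pos n) (sB_le_zpt i)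

lemma sep_teeth {n i j : ℕ} (hij : i < j) (hj : j < n) :
    ppt n i + sB n * (3 / (4 * n)) ≤ zpt n j := by
  unfold ppt zpt
  have hn : (0:ℝ) < n := by exact_mod_cast Nat.pos_of_ne_zero (by omega)
  have hij' : (i:ℝ) + 1 ≤ j := by exact_mod_cast hij
  have key : (i:ℝ)/n + 1/(4*n) + 3/(4*n) ≤ j/n := by
    rw [div_add_div _ _ (by positivity) (by positivity), div_add_div _ _ (by positivity) (by positivity),
      div_le_div_iff₀ (by positivity) hn]
    ring_nf
    nlinarith [mul_le_mul_of_nonneg_right hij' (pow_pos hn 3).le]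
  nlinarith [sB_pos n, mul_le_mul_of_nonneg_left key (sB_pos n).le]

lemma phiFun_zpt {n i : ℕ} (hi : i ≤ n) (hn : 0 < n) : phiFun n (zpt n i) = 0 := by
  have hzpos := zpt_pos (n := n) i
  have hnR : (0:ℝ) < n := by exact_mod_cast hn
  unfold phiFun
  have habs : |zpt n i| = zpt n i := abs_of_pos hzpos
  have harg : (|zpt n i| - sB n) / sB n = i / n := by
    rw [habs]
    have : zpt n i - sB n = sB n * ((i:ℝ)/n) := by unfold zpt; ring
    rw [this, mul_comm, mul_div_assoc]
    rw [div_self (sB_pos n).ne', mul_one]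
  rw [harg, clamp01_of_mem (by positivity) (by
    rw [div_le_one hnR]; exact_mod_cast hi)]
  have : 2 * π * n * ((i:ℝ) / n) = (2 * i : ℤ) * π := by
    push_cast; field_simp
  rw [this, Real.sin_int_mul_pi]
  simp

lemma phiFun_ppt {n i : ℕ} (hi : i < n) : phiFun n (ppt n i) = aB n := by
  have hn : 0 < n := Nat.pos_of_ne_zero (by omega)
  have hnR : (0:ℝ) < n := by exact_mod_cast hn
  have hppos : 0 < ppt n i := lt_trans (zpt_pos i) (zpt_lt_ppt hn)
  unfold phiFun
  have habs : |ppt n i| = ppt n i := abs_of_pos hppos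
  have harg : (|ppt n i| - sB n) / sB n = i / n + 1/(4*n) := by
    rw [habs]
    have : ppt n i - sB n = sB n * ((i:ℝ)/n + 1/(4*n)) := by unfold ppt; ring
    rw [this, mul_comm, mul_div_assoc]
    rw [div_self (sB_pos n).ne', mul_one]
  have hmem1 : (0:ℝ) ≤ (i:ℝ)/n + 1/(4*n) := by positivity
  have hmem2 : (i:ℝ)/n + 1/(4*n) ≤ 1 := by
    have : (i:ℝ) + 1 ≤ n := by exact_mod_cast hi
    rw [div_add_div _ _ (by positivity) (by positivity), div_le_one (by positivity)]
    nlinarith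
  rw [harg, clamp01_of_mem hmem1 hmem2]
  have : 2 * π * n * ((i:ℝ)/n + 1/(4*n)) = (i:ℝ) * (2*π) + π/2 := by
    field_simp; ring
  rw [this]
  have : Real.sin ((i:ℝ) * (2*π) + π/2) = Real.cos ((i:ℝ)*(2*π)) := Real.sin_add_pi_div_two _
  rw [this]
  have : Real.cos ((i:ℝ)*(2*π)) = 1 := by
    have := Real.cos_int_mul_two_pi (i:ℤ)
    push_cast at this; exact this
  rw [this]
  simp


abbrev K : Set ℝ := Set.Icc (0:ℝ) 1

instance : Nonempty K := ⟨⟨0, by norm_num⟩⟩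

/-- projection onto `[0,1]` -/
def eK (x : ℝ) : K := Set.projIcc 0 1 zero_le_one x

lemma continuous_eK : Continuous eK :=
  (continuous_projIcc : Continuous (Set.projIcc (0:ℝ) 1 zero_le_one))

/-- a dense sequence in `[0,1]` -/
def q : ℕ → K := TopologicalSpace.denseSeq K

lemma denseRange_q : DenseRange q := TopologicalSpace.denseRange_denseSeq K

/-- index of the coefficient used in block `n` -/
def kIdx (n : ℕ) : ℕ := (Nat.unpair n).1

lemma kIdx_pair (k b : ℕ) : kIdx (Nat.pair k b) = k := by
  unfold kIdx; rw [Nat.unpair_pair]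

/-- the window function for the norm -/
def Wfun (x : ℝ) : ℝ := max 0 (min 1 (min (x - 1) (4 - x)))

lemma continuous_Wfun : Continuous Wfun := by
  unfold Wfun; fun_prop

lemma Wfun_nonneg (x : ℝ) : 0 ≤ Wfun x := le_max_left _ _

lemma Wfun_le_one (x : ℝ) : Wfun x ≤ 1 :=
  max_le zero_le_one (min_le_left _ _)

lemma Wfun_eq_zero {x : ℝ} (h : x ≤ 1) : Wfun x = 0 := by
  unfold Wfun
  rw [max_eq_left]
  exact le_trans (min_le_right _ _) (le_trans (min_le_left _ _) (by linarith))

lemma Wfun_eq_one {x : ℝ} (h1 : 2 ≤ x) (h2 : x ≤ 3) : Wfun x = 1 := by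
  unfold Wfun
  rw [min_eq_left (le_min (by linarith) (by linarith)), max_eq_right zero_le_one]

/-- block bump as a bounded continuous function -/
def PhiB (n : ℕ) : ℝ →ᵇ ℝ :=
  BoundedContinuousFunction.ofNormedAddCommGroup (phiFun n) (phiFun_continuous n) (aB n)
    (fun x => by rw [Real.norm_eq_abs]; exact abs_phiFun_le n x)

@[simp] lemma PhiB_apply (n : ℕ) (x : ℝ) : PhiB n x = phiFun n x := rfl

lemma norm_PhiB_le (n : ℕ) : ‖PhiB n‖ ≤ aB n :=
  BoundedContinuousFunction.norm_ofNormedAddCommGroup_le (phiFun_continuous n) (aB_pos n).le _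

/-- the window part of the embedding -/
def WB (f : C(K, ℝ)) : ℝ →ᵇ ℝ :=
  BoundedContinuousFunction.ofNormedAddCommGroup (fun x => f (eK (x - 2)) * Wfun x)
    (((map_continuous f).comp (continuous_eK.comp (continuous_id.sub continuous_const))).mul
      continuous_Wfun) ‖f‖
    (fun x => by
      rw [Real.norm_eq_abs, abs_mul]
      calc |f (eK (x-2))| * |Wfun x| ≤ ‖f‖ * 1 := by
            apply mul_le_mul (f.norm_coe_le_norm _) _ (abs_nonneg _) (norm_nonneg f)
            rw [abs_of_nonneg (Wfun_nonneg x)]; exact Wfun_le_one x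
      _ = ‖f‖ := mul_one _)

@[simp] lemma WB_apply (f : C(K, ℝ)) (x : ℝ) : WB f x = f (eK (x - 2)) * Wfun x := rfl

lemma summable_geom_aux : Summable (fun n : ℕ => (2:ℝ)⁻¹ ^ (n+1)) :=
  (summable_nat_add_iff 1).2 (summable_geometric_of_lt_one (by norm_num) (by norm_num))

lemma summable_aux (f : C(K, ℝ)) : Summable (fun n => f (q (kIdx n)) • PhiB n) := by
  have hb : ∀ n : ℕ, ‖f (q (kIdx n)) • PhiB n‖ ≤ ‖f‖ * (2:ℝ)⁻¹ ^ (n+1) := by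
    intro n
    refine le_trans (norm_smul_le (f (q (kIdx n))) (PhiB n)) ?_
    rw [Real.norm_eq_abs]
    calc |f (q (kIdx n))| * ‖PhiB n‖ ≤ ‖f‖ * aB n :=
          mul_le_mul (f.norm_coe_le_norm _) (norm_PhiB_le n) (norm_nonneg _) (norm_nonneg f)
    _ = ‖f‖ * (2:ℝ)⁻¹ ^ (n+1) := rfl
  exact Summable.of_norm
    (Summable.of_nonneg_of_le (fun n => norm_nonneg _) hb (summable_geom_aux.mul_left ‖f‖))

/-- the embedding, as a plain function -/
def PsiFun (f : C(K, ℝ)) : ℝ →ᵇ ℝ := WB f + ∑' n, f (q (kIdx n)) • PhiB n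

lemma PsiFun_apply (f : C(K, ℝ)) (x : ℝ) :
    PsiFun f x = f (eK (x - 2)) * Wfun x + ∑' n, f (q (kIdx n)) * phiFun n x := by
  unfold PsiFun
  rw [BoundedContinuousFunction.add_apply, WB_apply]
  congr 1
  have h1 : (∑' n, f (q (kIdx n)) • PhiB n) x
      = (BoundedContinuousFunction.evalCLM ℝ (α := ℝ) (β := ℝ) x)
        (∑' n, f (q (kIdx n)) • PhiB n) := rfl
  rw [h1, (BoundedContinuousFunction.evalCLM ℝ (α := ℝ) (β := ℝ) x).map_tsum (summable_aux f)]
  apply tsum_congr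
  intro n
  rw [BoundedContinuousFunction.evalCLM_apply, BoundedContinuousFunction.coe_smul]
  simp [smul_eq_mul]

section Sec4

lemma phi_unique {x : ℝ} {m n : ℕ} (hm : phiFun m x ≠ 0) (hn : phiFun n x ≠ 0) : m = n := by
  by_contra h
  have hsm : sB m < |x| ∧ |x| < 2 * sB m := by
    constructor
    · by_contra h'; exact hm (phiFun_eq_zero_of_le (not_lt.1 h'))
    · by_contra h'; exact hm (phiFun_eq_zero_of_ge (not_lt.1 h'))
  have hsn : sB n < |x| ∧ |x| < 2 * sB n := by
    constructor
    · by_contra h'; exact hn (phiFun_eq_zero_of_le (not_lt.1 h'))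
    · by_contra h'; exact hn (phiFun_eq_zero_of_ge (not_lt.1 h'))
  rcases Nat.lt_or_ge m n with hlt | hge
  · linarith [blocks_disjoint hlt, hsm.1, hsn.2]
  · have hlt : n < m := by omega
    linarith [blocks_disjoint hlt, hsn.1, hsm.2]

lemma phi_sum_single (f : C(K, ℝ)) {x : ℝ} {n : ℕ} (h : ∀ m, m ≠ n → phiFun m x = 0) :
    (∑' m, f (q (kIdx m)) * phiFun m x) = f (q (kIdx n)) * phiFun n x :=
  tsum_eq_single n (fun m hm => by rw [h m hm, mul_zero])

lemma PsiFun_apply_block (f : C(K, ℝ)) {n : ℕ} {x : ℝ}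
    (h1 : sB n ≤ |x|) (h2 : |x| ≤ 2 * sB n) :
    PsiFun f x = f (q (kIdx n)) * phiFun n x := by
  rw [PsiFun_apply, Wfun_eq_zero (by
    have := two_sB_le_half n
    have := le_abs_self x
    linarith), mul_zero, zero_add]
  apply phi_sum_single
  intro m hm
  rcases Nat.lt_or_ge m n with hlt | hge
  · exact phiFun_eq_zero_of_le (le_trans h2 (blocks_disjoint hlt).le)
  · have hlt : n < m := by omega
    exact phiFun_eq_zero_of_ge (le_trans (blocks_disjoint hlt).le h1)

lemma PsiFun_apply_far (f : C(K, ℝ)) {x : ℝ} (hx : 1 ≤ |x|) :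
    PsiFun f x = f (eK (x - 2)) * Wfun x := by
  rw [PsiFun_apply]
  have h : ∀ m : ℕ, f (q (kIdx m)) * phiFun m x = 0 := by
    intro m
    rw [phiFun_eq_zero_of_ge (by linarith [two_sB_le_half m]), mul_zero]
  rw [(tsum_congr h).trans tsum_zero, add_zero]

lemma norm_PsiFun_le (f : C(K, ℝ)) : ‖PsiFun f‖ ≤ ‖f‖ := by
  rw [BoundedContinuousFunction.norm_le (norm_nonneg f)]
  intro x
  rw [Real.norm_eq_abs]
  rcases le_or_gt 1 |x| with h | h
  · rw [PsiFun_apply_far f h, abs_mul]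
    calc |f (eK (x-2))| * |Wfun x| ≤ ‖f‖ * 1 := by
          apply mul_le_mul (f.norm_coe_le_norm _) _ (abs_nonneg _) (norm_nonneg f)
          rw [abs_of_nonneg (Wfun_nonneg x)]; exact Wfun_le_one x
    _ = ‖f‖ := mul_one _
  · by_cases hz : ∀ m : ℕ, phiFun m x = 0
    · have : PsiFun f x = 0 := by
        rw [PsiFun_apply, Wfun_eq_zero (by linarith [le_abs_self x]), mul_zero, zero_add]
        rw [(tsum_congr (fun m => by rw [hz m, mul_zero])).trans tsum_zero]
      rw [this]; simpa using norm_nonneg f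
    · push_neg at hz
      obtain ⟨m₀, hm₀⟩ := hz
      have heval : PsiFun f x = f (q (kIdx m₀)) * phiFun m₀ x := by
        rw [PsiFun_apply, Wfun_eq_zero (by linarith [le_abs_self x]), mul_zero, zero_add]
        apply phi_sum_single
        intro m hm
        by_contra h'
        exact hm (phi_unique h' hm₀)
      rw [heval, abs_mul]
      calc |f (q (kIdx m₀))| * |phiFun m₀ x| ≤ ‖f‖ * 1 := by
            apply mul_le_mul (f.norm_coe_le_norm _) _ (abs_nonneg _) (norm_nonneg f)
            exact le_trans (abs_phiFun_le m₀ x) (aB_le_one m₀)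
      _ = ‖f‖ := mul_one _

lemma PsiFun_apply_window (f : C(K, ℝ)) (t : K) : PsiFun f ((t : ℝ) + 2) = f t := by
  have ht := t.2
  rw [Set.mem_Icc] at ht
  rw [PsiFun_apply_far f (by rw [abs_of_nonneg (by linarith)]; linarith)]
  have h1 : eK ((t : ℝ) + 2 - 2) = t := by
    unfold eK
    have : (t : ℝ) + 2 - 2 = (t : ℝ) := by ring
    rw [this, Set.projIcc_val zero_le_one t]
  rw [h1, Wfun_eq_one (by linarith) (by linarith), mul_one]

lemma norm_PsiFun_ge (f : C(K, ℝ)) : ‖f‖ ≤ ‖PsiFun f‖ := by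
  rw [ContinuousMap.norm_le f (norm_nonneg (PsiFun f))]
  intro t
  rw [← PsiFun_apply_window f t]
  exact (PsiFun f).norm_coe_le_norm _

lemma PsiFun_add (f g : C(K, ℝ)) : PsiFun (f + g) = PsiFun f + PsiFun g := by
  unfold PsiFun
  have hW : WB (f + g) = WB f + WB g := by
    ext x
    simp only [WB_apply, BoundedContinuousFunction.add_apply, ContinuousMap.add_apply]
    ring
  have hfun : (fun n => ((f + g) (q (kIdx n))) • PhiB n)
      = fun n => f (q (kIdx n)) • PhiB n + g (q (kIdx n)) • PhiB n := by
    funext n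
    rw [ContinuousMap.add_apply, add_smul]
  rw [hW, hfun, Summable.tsum_add (summable_aux f) (summable_aux g)]
  abel

lemma PsiFun_smul (c : ℝ) (f : C(K, ℝ)) : PsiFun (c • f) = c • PsiFun f := by
  unfold PsiFun
  have hW : WB (c • f) = c • WB f := by
    ext x
    simp only [WB_apply, BoundedContinuousFunction.coe_smul, ContinuousMap.smul_apply,
      Pi.smul_apply, smul_eq_mul]
    ring
  have hfun : (fun n => ((c • f) (q (kIdx n))) • PhiB n)
      = fun n => c • (f (q (kIdx n)) • PhiB n) := by
    funext n
    rw [ContinuousMap.smul_apply, smul_smul, smul_eq_mul]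
  rw [hW, hfun, Summable.tsum_const_smul c (summable_aux f), smul_add]

/-- the linear isometric embedding -/
def Psi : C(K, ℝ) →ₗᵢ[ℝ] (ℝ →ᵇ ℝ) where
  toFun := PsiFun
  map_add' := PsiFun_add
  map_smul' := PsiFun_smul
  norm_map' := fun f => le_antisymm (norm_PsiFun_le f) (norm_PsiFun_ge f)

end Sec4
section Dyn
open Dynamics UniformSpace Filter

variable {d : ℕ} (g : ℝ → ℝ)

lemma itinerary (z p : Fin d → ℝ) (hzp : ∀ i, z i ≤ p i)
    (hcov : ∀ i j, Set.Icc (z j) (p j) ⊆ g '' Set.Icc (z i) (p i)) :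
    ∀ (n : ℕ) (w : ℕ → Fin d), ∃ x, ∀ k ≤ n, g^[k] x ∈ Set.Icc (z (w k)) (p (w k)) := by
  intro n
  induction n with
  | zero =>
    intro w
    obtain ⟨x, hx⟩ := Set.nonempty_Icc.2 (hzp (w 0))
    exact ⟨x, fun k hk => by rw [Nat.le_zero.1 hk]; simpa using hx⟩
  | succ n ih =>
    intro w
    obtain ⟨y, hy⟩ := ih (fun k => w (k + 1))
    have hy0 : y ∈ Set.Icc (z (w 1)) (p (w 1)) := by simpa using hy 0 (Nat.zero_le n)
    obtain ⟨x, hx, hgx⟩ := hcov (w 0) (w 1) hy0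
    refine ⟨x, fun k hk => ?_⟩
    cases k with
    | zero => simpa using hx
    | succ j =>
      rw [Function.iterate_succ_apply, hgx]
      exact hy j (Nat.succ_le_succ_iff.1 hk)

lemma exists_dynNet (hd : 0 < d) (z p : Fin d → ℝ) (δ : ℝ) (hδ : 0 < δ)
    (hzp : ∀ i, z i ≤ p i)
    (hsep : ∀ i j, i ≠ j → ∀ x ∈ Set.Icc (z i) (p i), ∀ y ∈ Set.Icc (z j) (p j), δ ≤ |x - y|)
    (hcov : ∀ i j, Set.Icc (z j) (p j) ⊆ g '' Set.Icc (z i) (p i)) (n : ℕ) :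
    ∃ s : Finset ℝ,
      IsDynNetIn g (closure (Set.range g)) {pr : ℝ × ℝ | dist pr.1 pr.2 < δ/2} n s ∧
      s.card = d ^ n := by
  classical
  -- extend words and pick itinerary points
  have key : ∀ w : Fin n → Fin d, ∃ x,
      ∀ k ≤ n, g^[k] x ∈ Set.Icc (z (if h : k < n then w ⟨k, h⟩ else ⟨0, hd⟩))
        (p (if h : k < n then w ⟨k, h⟩ else ⟨0, hd⟩)) := by
    intro w
    exact itinerary g z p hzp hcov n (fun k => if h : k < n then w ⟨k, h⟩ else ⟨0, hd⟩)
  choose pt hpt using key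
  -- separation of distinct words
  have sep : ∀ w w' : Fin n → Fin d, w ≠ w' →
      ∃ k < n, δ ≤ |g^[k] (pt w) - g^[k] (pt w')| := by
    intro w w' hww
    obtain ⟨k, hk⟩ := Function.ne_iff.1 hww
    refine ⟨k, k.2, ?_⟩
    have h1 := hpt w k (le_of_lt k.2)
    have h2 := hpt w' k (le_of_lt k.2)
    rw [dif_pos k.2] at h1 h2
    simp only [Fin.eta] at h1 h2
    exact hsep (w k) (w' k) hk _ h1 _ h2
  have hinj : Function.Injective pt := by
    intro w w' h
    by_contra hww
    obtain ⟨k, -, hk⟩ := sep w w' hww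
    rw [h, sub_self, abs_zero] at hk
    linarith
  refine ⟨Finset.image pt Finset.univ, ⟨?_, ?_⟩, ?_⟩
  · -- subset of closure of range
    intro x hx
    simp only [Finset.coe_image, Finset.coe_univ, Set.image_univ, Set.mem_range] at hx
    obtain ⟨w, rfl⟩ := hx
    apply subset_closure
    have h0 := hpt w 0 (Nat.zero_le n)
    simp only [Function.iterate_zero, id_eq] at h0
    obtain ⟨y, -, hy⟩ := hcov ⟨0, hd⟩ _ h0
    exact ⟨y, hy⟩
  · -- pairwise disjoint dynamical balls
    intro x hx y hy hxy
    simp only [Finset.coe_image, Finset.coe_univ, Set.image_univ, Set.mem_range] at hx hy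
    obtain ⟨w, rfl⟩ := hx
    obtain ⟨w', rfl⟩ := hy
    have hww : w ≠ w' := fun h => hxy (by rw [h])
    obtain ⟨k, hkn, hk⟩ := sep w w' hww
    simp only [Function.onFun]
    rw [Set.disjoint_left]
    rintro a ha ha'
    rw [ball, Set.mem_preimage, mem_dynEntourage] at ha ha'
    have d1 := ha k hkn
    have d2 := ha' k hkn
    simp only [Set.mem_setOf_eq] at d1 d2
    rw [Real.dist_eq] at d1 d2
    have : |g^[k] (pt w) - g^[k] (pt w')| < δ := by
      calc |g^[k] (pt w) - g^[k] (pt w')|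
          ≤ |g^[k] (pt w) - g^[k] a| + |g^[k] a - g^[k] (pt w')| := abs_sub_le _ _ _
      _ < δ/2 + δ/2 := by rw [abs_sub_comm (g^[k] (pt w'))] at d2; linarith
      _ = δ := by ring
    linarith
  · rw [Finset.card_image_of_injective _ hinj, Finset.card_univ, Fintype.card_fun]
    simp

open ENNReal EReal in
lemma coverEntropy_ge_log (hd : 0 < d) (z p : Fin d → ℝ) (δ : ℝ) (hδ : 0 < δ)
    (hzp : ∀ i, z i ≤ p i)
    (hsep : ∀ i j, i ≠ j → ∀ x ∈ Set.Icc (z i) (p i), ∀ y ∈ Set.Icc (z j) (p j), δ ≤ |x - y|)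
    (hcov : ∀ i j, Set.Icc (z j) (p j) ⊆ g '' Set.Icc (z i) (p i)) :
    (Real.log d : EReal) ≤ Dynamics.coverEntropy g (closure (Set.range g)) := by
  set F := closure (Set.range g) with hF
  set U : Set (ℝ × ℝ) := {pr : ℝ × ℝ | dist pr.1 pr.2 < δ/2} with hUdef
  have hU : U ∈ uniformity ℝ := Metric.dist_mem_uniformity (half_pos hδ)
  have hcard : ∀ n : ℕ, ((d : ℕ∞))^n ≤ netMaxcard g F U n := by
    intro n
    obtain ⟨s, hs, hc⟩ := exists_dynNet g hd z p δ hδ hzp hsep hcov n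
    calc ((d : ℕ∞))^n = (s.card : ℕ∞) := by rw [hc]; push_cast; ring
    _ ≤ netMaxcard g F U n := hs.card_le_netMaxcard
  have hlogd : ENNReal.log ((d : ℝ≥0∞)) = (Real.log d : EReal) := by
    rw [← ENNReal.ofReal_natCast, ENNReal.log_ofReal_of_pos (by exact_mod_cast hd)]
  refine le_trans ?_ (netEntropyEntourage_le_coverEntropy g F hU)
  rw [netEntropyEntourage]
  apply le_limsup_of_frequently_le'
  apply Filter.Eventually.frequently
  filter_upwards [Filter.eventually_ge_atTop 1] with n hn
  have h1 : ((↑((d : ℕ∞)^n) : ℝ≥0∞)) ≤ (netMaxcard g F U n : ℝ≥0∞) :=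
    ENat.toENNReal_le.2 (hcard n)
  have h2 : (Real.log d : EReal) ≤ ENNReal.log (netMaxcard g F U n) / (n : EReal) := by
    have h3 : ENNReal.log ((↑((d : ℕ∞)^n) : ℝ≥0∞)) = (n : EReal) * (Real.log d : EReal) := by
      rw [ENat.toENNReal_pow, ENat.toENNReal_coe, ENNReal.log_pow, hlogd]
    have h4 := ENNReal.log_monotone h1
    rw [h3] at h4
    have h5 : ((n : EReal) * (Real.log d : EReal)) / (n : EReal) = (Real.log d : EReal) := by
      rw [← EReal.mul_div]
      exact EReal.mul_div_cancel (natCast_ne_bot n) (natCast_ne_top n)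
        (by exact_mod_cast (by omega : n ≠ 0))
    rw [← h5]
    exact monotone_div_right_of_nonneg (by exact_mod_cast Nat.zero_le n) h4
  exact h2

lemma coverEntropy_top_of_horseshoes
    (H : ∀ M : ℕ, ∃ d : ℕ, M ≤ d ∧ ∃ (z p : Fin d → ℝ) (δ : ℝ), 0 < δ ∧
      (∀ i, z i ≤ p i) ∧
      (∀ i j, i ≠ j → ∀ x ∈ Set.Icc (z i) (p i), ∀ y ∈ Set.Icc (z j) (p j), δ ≤ |x - y|) ∧
      (∀ i j, Set.Icc (z j) (p j) ⊆ g '' Set.Icc (z i) (p i))) :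
    Dynamics.coverEntropy g (closure (Set.range g)) = ⊤ := by
  rw [EReal.eq_top_iff_forall_lt]
  intro y
  set M : ℕ := ⌈Real.exp y⌉₊ + 1 with hMdef
  have hM1 : 1 ≤ M := by omega
  have hexp : Real.exp y < M := by
    calc Real.exp y ≤ ⌈Real.exp y⌉₊ := Nat.le_ceil _
    _ < M := by exact_mod_cast Nat.lt_succ_self _
  have hylog : y < Real.log M :=
    (Real.lt_log_iff_exp_lt (by exact_mod_cast Nat.pos_of_ne_zero (by omega))).2 hexp
  obtain ⟨d, hMd, z, p, δ, hδ, hzp, hsep, hcov⟩ := H M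
  have hd : 0 < d := by omega
  calc (y : EReal) < (Real.log M : EReal) := by exact_mod_cast hylog
  _ ≤ (Real.log d : EReal) := by
      apply EReal.coe_le_coe_iff.2
      apply Real.log_le_log (by exact_mod_cast Nat.pos_of_ne_zero (by omega))
      exact_mod_cast hMd
  _ ≤ Dynamics.coverEntropy g (closure (Set.range g)) :=
      coverEntropy_ge_log g hd z p δ hδ hzp hsep hcov

end Dyn
lemma two_sB_eq (n : ℕ) : 2 * sB n = (2:ℝ)⁻¹ ^ n * aB n := by
  unfold sB aB
  have h4 : (4:ℝ)⁻¹ = 2⁻¹ * 2⁻¹ := by norm_num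
  rw [h4, mul_pow, pow_succ (2⁻¹:ℝ) n]
  ring

lemma teeth_sep {n : ℕ} (i j : Fin n) (hij : i ≠ j) :
    ∀ x ∈ Set.Icc (zpt n i) (ppt n i), ∀ y ∈ Set.Icc (zpt n j) (ppt n j),
      sB n * (3 / (4 * n)) ≤ |x - y| := by
  intro x hx y hy
  rcases lt_or_gt_of_ne (fun h => hij (Fin.ext h) : (i:ℕ) ≠ (j:ℕ)) with h | h
  · have := sep_teeth h j.2
    rw [abs_sub_comm]
    calc sB n * (3/(4*n)) ≤ y - x := by
          have hx2 := hx.2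
          have hy1 := hy.1
          linarith
    _ ≤ |y - x| := le_abs_self _
  · have := sep_teeth h i.2
    calc sB n * (3/(4*n)) ≤ x - y := by
          have hx1 := hx.1
          have hy2 := hy.2
          linarith
    _ ≤ |x - y| := le_abs_self _

/-- main horseshoe lemma: on block `n` whose coefficient is `c ≠ 0` with `2⁻¹ ^ n ≤ |c|`,
the map `PsiFun f` has an `n`-horseshoe. -/
lemma block_gives_horseshoe (f : C(K, ℝ)) {n : ℕ} (hn : 0 < n)
    {c : ℝ} (hc : f (q (kIdx n)) = c) (hc0 : c ≠ 0) (hcn : (2:ℝ)⁻¹ ^ n ≤ |c|) :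
    ∃ (z p : Fin n → ℝ) (δ : ℝ), 0 < δ ∧
      (∀ i, z i ≤ p i) ∧
      (∀ i j, i ≠ j → ∀ x ∈ Set.Icc (z i) (p i), ∀ y ∈ Set.Icc (z j) (p j), δ ≤ |x - y|) ∧
      (∀ i j, Set.Icc (z j) (p j) ⊆ (PsiFun f) '' Set.Icc (z i) (p i)) := by
  have hnR : (0:ℝ) < n := by exact_mod_cast hn
  have hδ : 0 < sB n * (3 / (4 * n)) := by
    have := sB_pos n; positivity
  have heval : ∀ x : ℝ, sB n ≤ |x| → |x| ≤ 2 * sB n → PsiFun f x = c * phiFun n x := by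
    intro x h1 h2
    rw [PsiFun_apply_block f h1 h2, hc]
  have habs : ∀ i : Fin n, ∀ x ∈ Set.Icc (zpt n i) (ppt n i), sB n ≤ |x| ∧ |x| ≤ 2 * sB n := by
    intro i x hx
    have h0 : 0 < x := lt_of_lt_of_le (zpt_pos i) hx.1
    rw [abs_of_pos h0]
    exact ⟨le_trans (sB_le_zpt i) hx.1, le_trans hx.2 (ppt_lt_two_sB i.2).le⟩
  have heval' : ∀ i : Fin n, ∀ u ∈ Set.Icc (zpt n (i:ℕ)) (ppt n (i:ℕ)),
      PsiFun f u = c * phiFun n u ∧ PsiFun f (-u) = c * phiFun n u := by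
    intro i u hu
    obtain ⟨h1, h2⟩ := habs i u hu
    refine ⟨heval u h1 h2, ?_⟩
    rw [heval (-u) (by rwa [abs_neg]) (by rwa [abs_neg]), phiFun_even]
  have hbound : 2 * sB n ≤ |c| * aB n := by
    rw [two_sB_eq n]
    exact mul_le_mul_of_nonneg_right hcn (aB_pos n).le
  have hcont := (PsiFun f).continuous
  have hmemz : ∀ i : Fin n, zpt n (i:ℕ) ∈ Set.Icc (zpt n (i:ℕ)) (ppt n (i:ℕ)) :=
    fun i => ⟨le_refl _, (zpt_lt_ppt hn).le⟩
  have hmemp : ∀ i : Fin n, ppt n (i:ℕ) ∈ Set.Icc (zpt n (i:ℕ)) (ppt n (i:ℕ)) :=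
    fun i => ⟨(zpt_lt_ppt hn).le, le_refl _⟩
  rcases lt_or_gt_of_ne hc0 with hneg | hpos
  · -- c < 0 : mirrored intervals
    have habsc : |c| = -c := abs_of_neg hneg
    refine ⟨fun i => -(ppt n i), fun i => -(zpt n i), sB n * (3/(4*n)), hδ, ?_, ?_, ?_⟩
    · intro i
      simp only [neg_le_neg_iff]
      exact (zpt_lt_ppt hn).le
    · intro i j hij x hx y hy
      simp only [Set.mem_Icc] at hx hy
      have hx' : -x ∈ Set.Icc (zpt n (i:ℕ)) (ppt n (i:ℕ)) :=
        ⟨by linarith [hx.2], by linarith [hx.1]⟩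
      have hy' : -y ∈ Set.Icc (zpt n (j:ℕ)) (ppt n (j:ℕ)) :=
        ⟨by linarith [hy.2], by linarith [hy.1]⟩
      have := teeth_sep i j hij (-x) hx' (-y) hy'
      rw [show -x - -y = -(x - y) by ring, abs_neg] at this
      exact this
    · intro i j
      have hzp' : -(ppt n (i:ℕ)) ≤ -(zpt n (i:ℕ)) := neg_le_neg (zpt_lt_ppt hn).le
      have he1 : PsiFun f (-(zpt n (i:ℕ))) = 0 := by
        rw [(heval' i _ (hmemz i)).2, phiFun_zpt i.2.le hn, mul_zero]
      have he2 : PsiFun f (-(ppt n (i:ℕ))) = c * aB n := by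
        rw [(heval' i _ (hmemp i)).2, phiFun_ppt i.2]
      have himg := intermediate_value_Icc hzp' hcont.continuousOn
      rw [he1, he2] at himg
      intro y hy
      apply himg
      simp only [Set.mem_Icc] at hy ⊢
      have hb1 : ppt n (j:ℕ) ≤ |c| * aB n := le_trans (ppt_lt_two_sB j.2).le hbound
      rw [habsc] at hb1
      constructor
      · have := hy.1
        linarith
      · have := hy.2
        linarith [zpt_pos (n := n) (j:ℕ)]
  · -- c > 0
    have habsc : |c| = c := abs_of_pos hpos
    refine ⟨fun i => zpt n i, fun i => ppt n i, sB n * (3/(4*n)), hδ, ?_, ?_, ?_⟩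
    · intro i
      exact (zpt_lt_ppt hn).le
    · intro i j hij x hx y hy
      exact teeth_sep i j hij x hx y hy
    · intro i j
      have he1 : PsiFun f (zpt n (i:ℕ)) = 0 := by
        rw [(heval' i _ (hmemz i)).1, phiFun_zpt i.2.le hn, mul_zero]
      have he2 : PsiFun f (ppt n (i:ℕ)) = c * aB n := by
        rw [(heval' i _ (hmemp i)).1, phiFun_ppt i.2]
      have himg := intermediate_value_Icc (zpt_lt_ppt (n := n) (i := (i:ℕ)) hn).le hcont.continuousOn
      rw [he1, he2] at himg
      intro y hy
      apply himg
      simp only [Set.mem_Icc] at hy ⊢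
      have hb1 : ppt n (j:ℕ) ≤ |c| * aB n := le_trans (ppt_lt_two_sB j.2).le hbound
      rw [habsc] at hb1
      constructor
      · linarith [zpt_pos (n := n) (j:ℕ), hy.1]
      · have := hy.2
        linarith



lemma exists_nonzero_coeff (f : C(K, ℝ)) (hf : f ≠ 0) : ∃ k : ℕ, f (q k) ≠ 0 := by
  have : ∃ t : K, f t ≠ 0 := by
    by_contra h
    push_neg at h
    exact hf (ContinuousMap.ext fun t => by rw [h t]; rfl)
  obtain ⟨t, ht⟩ := this
  have hopen : IsOpen {u : K | f u ≠ 0} :=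
    isOpen_compl_singleton.preimage (map_continuous f)
  obtain ⟨k, hk⟩ := denseRange_q.exists_mem_open hopen ⟨t, ht⟩
  exact ⟨k, hk⟩

lemma PsiFun_entropy_top (f : C(K, ℝ)) (hf : f ≠ 0) :
    Dynamics.coverEntropy (PsiFun f) (closure (Set.range (PsiFun f))) = ⊤ := by
  obtain ⟨k, hk⟩ := exists_nonzero_coeff f hf
  set c : ℝ := f (q k) with hcdef
  have hc0 : c ≠ 0 := hk
  have hcabs : 0 < |c| := abs_pos.2 hc0
  apply coverEntropy_top_of_horseshoes
  intro M
  obtain ⟨N, hN⟩ : ∃ N : ℕ, (2:ℝ)⁻¹ ^ N ≤ |c| := by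
    obtain ⟨N, hN⟩ := exists_pow_lt_of_lt_one hcabs (by norm_num : (2:ℝ)⁻¹ < 1)
    exact ⟨N, hN.le⟩
  set b : ℕ := max N (max M 1) with hbdef
  set n : ℕ := Nat.pair k b with hndef
  have hbn : b ≤ n := Nat.right_le_pair k b
  have hn : 0 < n := by
    have : 1 ≤ b := le_max_of_le_right (le_max_right M 1)
    omega
  have hMn : M ≤ n := le_trans (le_max_of_le_right (le_max_left M 1)) hbn
  have hcn : (2:ℝ)⁻¹ ^ n ≤ |c| := by
    calc (2:ℝ)⁻¹ ^ n ≤ (2:ℝ)⁻¹ ^ N := by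
          apply pow_le_pow_of_le_one (by norm_num) (by norm_num)
          exact le_trans (le_max_left N _) hbn
    _ ≤ |c| := hN
  refine ⟨n, hMn, ?_⟩
  exact block_gives_horseshoe f hn (by rw [hndef, kIdx_pair]) hc0 hcn


end InfEnt

end


open BoundedContinuousFunction

theorem exists_isometric_embedding_infinite_entropy :
    ∃ Ψ : C(↥(Set.Icc (0 : ℝ) 1), ℝ) →ₗᵢ[ℝ] (ℝ →ᵇ ℝ),
      ∀ f : C(↥(Set.Icc (0 : ℝ) 1), ℝ), f ≠ 0 → htop (Ψ f) = ⊤ := by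
  refine ⟨InfEnt.Psi, fun f hf => ?_⟩
  have h : (InfEnt.Psi f : ℝ →ᵇ ℝ) = InfEnt.PsiFun f := rfl
  rw [htop, h]
  exact InfEnt.PsiFun_entropy_top f hf
end

section
/- For every α ∈ (0,1) there exists an infinite-dimensional linear subspace A^α of the space of bounded continuous functions ℝ → ℝ such that every f ∈ A^α is α-Hölder on ℝ (i.e. sup{|f(x)−f(y)|/|x−y|^α : x,y ∈ ℝ, 0 < |x−y| ≤ 1} < ∞) and every nonzero f ∈ A^α has infinite topological entropy, h_top(f) = ∞. -/
open BoundedContinuousFunction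

namespace HolderEntropy

noncomputable section
open Real Set
open scoped ENNReal

/-- function index of block `k` -/
def nn (k : ℕ) : ℕ := k.unpair.1
/-- number of teeth of block `k` -/
def dd (k : ℕ) : ℕ := (Nat.unpair k.unpair.2).1 + 1
/-- left edge of block `k` -/
def aa (k : ℕ) : ℝ := (4:ℝ)⁻¹ ^ k
/-- right edge of block `k` -/
def tp (k : ℕ) : ℝ := 2 * aa k
/-- tooth width in block `k` -/
def ww (k : ℕ) : ℝ := aa k / (2 * dd k)
/-- tooth height in block `k` -/
def hh (α : ℝ) (k : ℕ) : ℝ := ww k ^ α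
/-- the oscillating bump on block `k` -/
def bump (α : ℝ) (k : ℕ) (x : ℝ) : ℝ :=
  hh α k * Real.sin (π / ww k * (min (max x (aa k)) (tp k) - aa k))

lemma dd_pos (k : ℕ) : 0 < dd k := Nat.succ_pos _
lemma aa_pos (k : ℕ) : 0 < aa k := pow_pos (by norm_num) k
lemma ddR_pos (k : ℕ) : (0:ℝ) < 2 * dd k := by
  have := dd_pos k
  have : (0:ℝ) < (dd k : ℝ) := by exact_mod_cast this
  linarith
lemma ww_pos (k : ℕ) : 0 < ww k := div_pos (aa_pos k) (ddR_pos k)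
lemma hh_pos {α : ℝ} (k : ℕ) : 0 < hh α k := rpow_pos_of_pos (ww_pos k) α
lemma aa_lt_tp (k : ℕ) : aa k < tp k := by
  have := aa_pos k; rw [tp]; linarith
lemma ww_le_aa (k : ℕ) : ww k ≤ aa k := by
  rw [ww]
  have h1 : (1:ℝ) ≤ 2 * dd k := by
    have := dd_pos k
    have : (1:ℝ) ≤ (dd k : ℝ) := by exact_mod_cast this
    linarith
  calc aa k / (2 * dd k) ≤ aa k / 1 := by
        apply div_le_div_of_nonneg_left (aa_pos k).le one_pos h1
    _ = aa k := by ring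

lemma tp_eq (k : ℕ) : tp k = aa k + 2 * dd k * ww k := by
  have h : (2 * (dd k) : ℝ) ≠ 0 := (ddR_pos k).ne'
  rw [tp, ww]; field_simp [(Nat.cast_pos.mpr (dd_pos k) : (0:ℝ) < dd k).ne']; ring

lemma aa_antitone {j k : ℕ} (h : j ≤ k) : aa k ≤ aa j :=
  pow_le_pow_of_le_one (by norm_num) (by norm_num) h

/-- blocks are ordered: block `k` is to the left of block `j` when `j < k` -/
lemma tp_le_aa {j k : ℕ} (h : j < k) : tp k ≤ aa j := by
  have h1 : aa k ≤ aa (j+1) := aa_antitone h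
  have h2 : aa (j+1) = aa j / 4 := by rw [aa, aa, pow_succ]; ring
  rw [tp]; rw [h2] at h1
  have := aa_pos j
  linarith


variable {α : ℝ}

lemma bump_continuous (α : ℝ) (k : ℕ) : Continuous (bump α k) := by
  unfold bump
  fun_prop

/-- the clamp map is 1-Lipschitz -/
lemma clamp_lip (k : ℕ) (x y : ℝ) :
    |min (max x (aa k)) (tp k) - min (max y (aa k)) (tp k)| ≤ |x - y| := by
  refine le_trans (abs_min_sub_min_le_max _ _ _ _) ?_
  simp only [sub_self, abs_zero]
  refine max_le (le_trans (abs_max_sub_max_le_abs _ _ _) le_rfl) (abs_nonneg _)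

lemma abs_sin_sub_sin (x y : ℝ) : |Real.sin x - Real.sin y| ≤ |x - y| := by
  rw [Real.sin_sub_sin]
  calc |2 * Real.sin ((x - y) / 2) * Real.cos ((x + y) / 2)|
      = 2 * |Real.sin ((x - y) / 2)| * |Real.cos ((x + y) / 2)| := by
        rw [abs_mul, abs_mul]; norm_num
    _ ≤ 2 * |(x - y) / 2| * 1 :=
        mul_le_mul (by have := Real.abs_sin_le_abs (x := (x-y)/2); linarith)
          (Real.abs_cos_le_one _) (abs_nonneg _) (by positivity)
    _ = |x - y| := by rw [abs_div]; simp; ring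

lemma bump_sub_le (α : ℝ) (k : ℕ) (x y : ℝ) :
    |bump α k x - bump α k y| ≤ hh α k * (π / ww k) * |x - y| := by
  have hw := ww_pos k
  have hh0 := (hh_pos k (α := α)).le
  rw [bump, bump, ← mul_sub, abs_mul, abs_of_nonneg hh0, mul_assoc]
  refine mul_le_mul_of_nonneg_left ?_ hh0
  refine le_trans (abs_sin_sub_sin _ _) ?_
  rw [← mul_sub, abs_mul, abs_of_nonneg (by positivity : (0:ℝ) ≤ π / ww k)]
  have h2 : (min (max x (aa k)) (tp k) - aa k) - (min (max y (aa k)) (tp k) - aa k)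
      = min (max x (aa k)) (tp k) - min (max y (aa k)) (tp k) := by ring
  rw [h2]
  exact mul_le_mul_of_nonneg_left (clamp_lip k x y) (by positivity)

lemma abs_bump_le (α : ℝ) (k : ℕ) (x : ℝ) : |bump α k x| ≤ hh α k := by
  rw [bump, abs_mul, abs_of_nonneg (hh_pos k (α := α)).le]
  calc hh α k * |Real.sin _| ≤ hh α k * 1 :=
        mul_le_mul_of_nonneg_left (Real.abs_sin_le_one _) (hh_pos k).le
    _ = hh α k := mul_one _

lemma bump_zero_left (α : ℝ) (k : ℕ) {x : ℝ} (hx : x ≤ aa k) : bump α k x = 0 := by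
  rw [bump, max_eq_right hx, min_eq_left (aa_lt_tp k).le]
  simp

lemma bump_zero_right (α : ℝ) (k : ℕ) {x : ℝ} (hx : tp k ≤ x) : bump α k x = 0 := by
  have h1 : aa k ≤ x := le_trans (aa_lt_tp k).le hx
  rw [bump, max_eq_left h1, min_eq_right hx]
  have hw := (ww_pos k).ne'
  have : π / ww k * (tp k - aa k) = (2 * dd k : ℕ) * π := by
    rw [tp_eq k]; push_cast; field_simp; ring
  rw [this, Real.sin_nat_mul_pi, mul_zero]

lemma bump_holder (hα : α ∈ Set.Ioo (0:ℝ) 1) (k : ℕ) (x y : ℝ) :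
    |bump α k x - bump α k y| ≤ π * |x - y| ^ α := by
  rcases eq_or_ne x y with rfl | hxy
  · simp [Real.rpow_natCast]
    positivity
  have hw := ww_pos k
  have ht : 0 < |x - y| := abs_sub_pos.2 hxy
  set t := |x - y| with htdef
  rcases le_or_gt t (ww k) with hcase | hcase
  · refine le_trans (bump_sub_le α k x y) ?_
    have key : ww k ^ α * t ≤ ww k * t ^ α := by
      have e1 : t ^ α * t ^ (1 - α) = t := by
        rw [← Real.rpow_add ht]; norm_num
      have e2 : ww k ^ α * ww k ^ (1 - α) = ww k := by
        rw [← Real.rpow_add hw]; norm_num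
      have hle : t ^ (1-α) ≤ ww k ^ (1-α) :=
        Real.rpow_le_rpow ht.le hcase (by linarith [hα.2])
      have m1 : ww k ^ α * t ^ α * t ^ (1-α) ≤ ww k ^ α * t ^ α * ww k ^ (1-α) :=
        mul_le_mul_of_nonneg_left hle (by positivity)
      calc ww k ^ α * t = ww k ^ α * t ^ α * t ^ (1-α) := by rw [mul_assoc, e1]
        _ ≤ ww k ^ α * t ^ α * ww k ^ (1-α) := m1
        _ = ww k ^ α * ww k ^ (1-α) * t ^ α := by ring
        _ = ww k * t ^ α := by rw [e2]
    rw [hh]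
    calc ww k ^ α * (π / ww k) * t = π * (ww k ^ α * t) / ww k := by ring
      _ ≤ π * (ww k * t ^ α) / ww k := by
          gcongr
      _ = π * t ^ α := by field_simp
  · calc |bump α k x - bump α k y| ≤ |bump α k x| + |bump α k y| := abs_sub _ _
      _ ≤ hh α k + hh α k := add_le_add (abs_bump_le α k x) (abs_bump_le α k y)
      _ = 2 * ww k ^ α := by rw [hh]; ring
      _ ≤ 2 * t ^ α := by
          have := Real.rpow_le_rpow hw.le hcase.le hα.1.le
          linarith
      _ ≤ π * t ^ α := by
          have h3 : (0:ℝ) ≤ t ^ α := (Real.rpow_pos_of_pos ht α).le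
          nlinarith [Real.two_le_pi]


/-- left endpoint of tooth `j` in block `k` -/
def leftT (k j : ℕ) : ℝ := aa k + (4*j+1)*(ww k/2)
/-- right endpoint of tooth `j` in block `k` -/
def rightT (k j : ℕ) : ℝ := aa k + (4*j+3)*(ww k/2)

lemma leftT_lt_rightT (k j : ℕ) : leftT k j < rightT k j := by
  have := ww_pos k
  rw [leftT, rightT]
  have hj : (0:ℝ) ≤ (j:ℝ) := Nat.cast_nonneg j
  nlinarith

lemma aa_le_leftT (k j : ℕ) : aa k ≤ leftT k j := by
  have := ww_pos k
  have hj : (0:ℝ) ≤ (j:ℝ) := Nat.cast_nonneg j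
  rw [leftT]; nlinarith

lemma rightT_le_tp {k j : ℕ} (hj : j < dd k) : rightT k j ≤ tp k := by
  have hw := ww_pos k
  have hjd : (j:ℝ) + 1 ≤ (dd k : ℝ) := by exact_mod_cast hj
  rw [rightT, tp_eq k]
  nlinarith

lemma leftT_mem {k j : ℕ} (hj : j < dd k) : leftT k j ∈ Set.Icc (aa k) (tp k) :=
  ⟨aa_le_leftT k j, le_trans (leftT_lt_rightT k j).le (rightT_le_tp hj)⟩

lemma tooth_subset {k j : ℕ} (hj : j < dd k) :
    Set.Icc (leftT k j) (rightT k j) ⊆ Set.Icc (aa k) (tp k) :=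
  Set.Icc_subset_Icc (aa_le_leftT k j) (rightT_le_tp hj)

lemma bump_leftT {α : ℝ} {k j : ℕ} (hj : j < dd k) : bump α k (leftT k j) = hh α k := by
  have hw := ww_pos k
  rw [bump, max_eq_left (aa_le_leftT k j),
    min_eq_left (le_trans (leftT_lt_rightT k j).le (rightT_le_tp hj))]
  have hph : π / ww k * (leftT k j - aa k) = π/2 + (j:ℤ) * (2*π) := by
    rw [leftT]; push_cast; field_simp; ring
  rw [hph, Real.sin_add_int_mul_two_pi, Real.sin_pi_div_two, mul_one]

lemma bump_rightT {α : ℝ} {k j : ℕ} (hj : j < dd k) : bump α k (rightT k j) = -hh α k := by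
  have hw := ww_pos k
  rw [bump, max_eq_left (le_trans (aa_le_leftT k j) (leftT_lt_rightT k j).le),
    min_eq_left (rightT_le_tp hj)]
  have hph : π / ww k * (rightT k j - aa k) = (π/2 + π) + (j:ℤ) * (2*π) := by
    rw [rightT]; push_cast; field_simp; ring
  rw [hph, Real.sin_add_int_mul_two_pi, Real.sin_add_pi, Real.sin_pi_div_two]
  ring

lemma tooth_sep {k : ℕ} {i j : ℕ} (hij : i ≠ j) {x y : ℝ}
    (hx : x ∈ Set.Icc (leftT k i) (rightT k i)) (hy : y ∈ Set.Icc (leftT k j) (rightT k j)) :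
    ww k ≤ |x - y| := by
  have hw := ww_pos k
  have key : ∀ a b : ℕ, ∀ u v : ℝ, a < b → u ≤ rightT k a → leftT k b ≤ v →
      u + ww k ≤ v := by
    intro a b u v hab h1 h2
    have hab' : (a:ℝ) + 1 ≤ (b:ℝ) := by exact_mod_cast hab
    rw [rightT] at h1; rw [leftT] at h2
    nlinarith
  rcases hij.lt_or_gt with h | h
  · have := key i j x y h hx.2 hy.1
    rw [abs_sub_comm, abs_of_nonneg (by linarith)]
    linarith
  · have := key j i y x h hy.2 hx.1
    rw [abs_of_nonneg (by linarith)]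
    linarith


lemma tp_lt_aa {j k : ℕ} (h : j < k) : tp k < aa j := by
  have h1 : aa k ≤ aa (j+1) := aa_antitone h
  have h2 : aa (j+1) = aa j / 4 := by rw [aa, aa, pow_succ]; ring
  rw [tp]; rw [h2] at h1
  have := aa_pos j
  linarith

lemma block_disjoint {j k : ℕ} (hjk : j ≠ k) {x : ℝ}
    (hx : x ∈ Set.Icc (aa k) (tp k)) : x ∉ Set.Icc (aa j) (tp j) := by
  intro hx'
  rcases hjk.lt_or_gt with h | h
  · exact absurd (le_trans hx'.1 hx.2) (not_le.2 (tp_lt_aa h))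
  · exact absurd (le_trans hx.1 hx'.2) (not_le.2 (tp_lt_aa h))

lemma bump_eq_zero_of_not_mem {α : ℝ} {k : ℕ} {x : ℝ} (hx : x ∉ Set.Icc (aa k) (tp k)) :
    bump α k x = 0 := by
  rcases le_or_gt x (aa k) with h | h
  · exact bump_zero_left α k h
  · refine bump_zero_right α k ?_
    by_contra h'
    exact hx ⟨h.le, (not_le.1 h').le⟩

/-- coefficient of block `k` in the function `g n` -/
def ind (n k : ℕ) : ℝ := if nn k = n then 1 else 0

/-- geometric bound for the bump heights -/
def uu (α : ℝ) (k : ℕ) : ℝ := ((4:ℝ)⁻¹ ^ α) ^ k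

lemma uu_summable {α : ℝ} (hα : 0 < α) : Summable (uu α) := by
  apply summable_geometric_of_lt_one (by positivity)
  exact Real.rpow_lt_one (by norm_num) (by norm_num) hα

lemma hh_le_uu {α : ℝ} (hα : 0 < α) (k : ℕ) : hh α k ≤ uu α k := by
  have h1 : hh α k ≤ aa k ^ α :=
    Real.rpow_le_rpow (ww_pos k).le (ww_le_aa k) hα.le
  refine le_trans h1 (le_of_eq ?_)
  rw [aa, uu, ← Real.rpow_natCast (4:ℝ)⁻¹ k, ← Real.rpow_mul (by norm_num), mul_comm,
    Real.rpow_mul (by norm_num), Real.rpow_natCast]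

lemma abs_ind_mul_bump_le {α : ℝ} (hα : 0 < α) (n k : ℕ) (x : ℝ) :
    ‖ind n k * bump α k x‖ ≤ uu α k := by
  rw [Real.norm_eq_abs, abs_mul, ind]
  split_ifs with h
  · simpa using le_trans (abs_bump_le α k x) (hh_le_uu hα k)
  · simp only [abs_zero, zero_mul]
    exact le_trans (abs_nonneg _) (le_trans (abs_bump_le α k 0) (hh_le_uu hα k))

/-- the basic functions spanning the subspace -/
def gfun (α : ℝ) (n : ℕ) : ℝ → ℝ := fun x => ∑' k, ind n k * bump α k x

lemma gfun_continuous {α : ℝ} (hα : 0 < α) (n : ℕ) : Continuous (gfun α n) := by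
  refine continuous_tsum (fun k => (continuous_const.mul (bump_continuous α k)))
    (uu_summable hα) (fun k x => abs_ind_mul_bump_le hα n k x)

lemma gfun_summand_summable {α : ℝ} (hα : 0 < α) (n : ℕ) (x : ℝ) :
    Summable (fun k => ind n k * bump α k x) := by
  refine Summable.of_norm_bounded (uu_summable hα) (fun k => abs_ind_mul_bump_le hα n k x)

lemma gfun_eq_on_block {α : ℝ} (hα : 0 < α) {n k : ℕ} {x : ℝ}
    (hx : x ∈ Set.Icc (aa k) (tp k)) :
    gfun α n x = ind n k * bump α k x := by
  refine tsum_eq_single k (fun j hjk => ?_)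
  rw [bump_eq_zero_of_not_mem (block_disjoint hjk hx), mul_zero]

lemma gfun_eq_zero {α : ℝ} (hα : 0 < α) {n : ℕ} {x : ℝ}
    (hx : ∀ k, x ∉ Set.Icc (aa k) (tp k)) :
    gfun α n x = 0 := by
  rw [gfun]
  convert tsum_zero with k
  rw [bump_eq_zero_of_not_mem (hx k), mul_zero]

lemma abs_gfun_le {α : ℝ} (hα : 0 < α) (n : ℕ) (x : ℝ) :
    |gfun α n x| ≤ ∑' k, uu α k := by
  rw [gfun, ← Real.norm_eq_abs]
  refine le_trans (norm_tsum_le_tsum_norm ?_) ?_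
  · exact (gfun_summand_summable hα n x).norm
  · exact Summable.tsum_le_tsum (fun k => abs_ind_mul_bump_le hα n k x)
      (gfun_summand_summable hα n x).norm (uu_summable hα)

/-- Main Hölder estimate for functions adapted to the block structure. -/
lemma adapted_holder {α : ℝ} (hα : α ∈ Set.Ioo (0:ℝ) 1) {f : ℝ → ℝ} {γ : ℕ → ℝ} {M : ℝ}
    (hA : ∀ k, ∀ x ∈ Set.Icc (aa k) (tp k), f x = γ k * bump α k x)
    (hZ : ∀ x, (∀ k, x ∉ Set.Icc (aa k) (tp k)) → f x = 0)
    (hM : ∀ k, |γ k| ≤ M) (x y : ℝ) :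
    |f x - f y| ≤ 2 * π * M * |x - y| ^ α := by
  have hM0 : 0 ≤ M := le_trans (abs_nonneg _) (hM 0)
  rcases eq_or_ne x y with rfl | hxy
  · simp only [sub_self, abs_zero]
    rw [Real.zero_rpow hα.1.ne']
    simp
  have hrp : (0:ℝ) ≤ |x - y| ^ α := Real.rpow_nonneg (abs_nonneg _) α
  -- key estimate for a point in a block against a point outside it
  have key : ∀ u v : ℝ, ∀ k, u ∈ Set.Icc (aa k) (tp k) → v ∉ Set.Icc (aa k) (tp k) →
      |f u| ≤ π * M * |u - v| ^ α := by
    intro u v k hu hv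
    have hfu : f u = γ k * bump α k u := hA k u hu
    have step : ∀ e : ℝ, bump α k e = 0 → |u - e| ≤ |u - v| →
        |f u| ≤ π * M * |u - v| ^ α := by
      intro e he hle
      have h1 : |f u| = |γ k| * |bump α k u - bump α k e| := by
        rw [hfu, he, sub_zero, abs_mul]
      rw [h1]
      calc |γ k| * |bump α k u - bump α k e| ≤ M * (π * |u - e| ^ α) :=
            mul_le_mul (hM k) (bump_holder hα k u e) (abs_nonneg _) hM0
        _ ≤ M * (π * |u - v| ^ α) := by
            have h2 : |u - e| ^ α ≤ |u - v| ^ α :=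
              Real.rpow_le_rpow (abs_nonneg _) hle hα.1.le
            have hπ := Real.pi_pos
            nlinarith [mul_le_mul_of_nonneg_left h2 (mul_nonneg hM0 hπ.le)]
        _ = π * M * |u - v| ^ α := by ring
    rcases lt_or_ge v (aa k) with h | h
    · refine step (aa k) (bump_zero_left α k le_rfl) ?_
      rw [abs_of_nonneg (by linarith [hu.1] : (0:ℝ) ≤ u - aa k),
        abs_of_nonneg (by linarith [hu.1] : (0:ℝ) ≤ u - v)]
      linarith
    · have h' : tp k < v := lt_of_not_ge (fun hc => hv ⟨h, hc⟩)
      refine step (tp k) (bump_zero_right α k le_rfl) ?_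
      rw [abs_sub_comm u (tp k), abs_sub_comm u v,
        abs_of_nonneg (by linarith [hu.2] : (0:ℝ) ≤ tp k - u),
        abs_of_nonneg (by linarith [hu.2] : (0:ℝ) ≤ v - u)]
      linarith
  have hπ := Real.pi_pos
  by_cases hx : ∃ k, x ∈ Set.Icc (aa k) (tp k)
  · obtain ⟨k, hk⟩ := hx
    by_cases hy : ∃ l, y ∈ Set.Icc (aa l) (tp l)
    · obtain ⟨l, hl⟩ := hy
      by_cases hkl : k = l
      · subst hkl
        rw [hA k x hk, hA k y hl, ← mul_sub, abs_mul]
        calc |γ k| * |bump α k x - bump α k y| ≤ M * (π * |x - y| ^ α) :=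
              mul_le_mul (hM k) (bump_holder hα k x y) (abs_nonneg _) hM0
          _ ≤ 2 * π * M * |x - y| ^ α := by nlinarith [mul_nonneg (mul_nonneg hπ.le hM0) hrp]
      · have hyk : y ∉ Set.Icc (aa k) (tp k) := block_disjoint hkl hl
        have hxl : x ∉ Set.Icc (aa l) (tp l) := block_disjoint (Ne.symm hkl) hk
        calc |f x - f y| ≤ |f x| + |f y| := abs_sub _ _
          _ ≤ π * M * |x - y| ^ α + π * M * |y - x| ^ α :=
              add_le_add (key x y k hk hyk) (key y x l hl hxl)
          _ = 2 * π * M * |x - y| ^ α := by rw [abs_sub_comm y x]; ring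
    · push_neg at hy
      rw [hZ y hy, sub_zero]
      calc |f x| ≤ π * M * |x - y| ^ α := key x y k hk (hy k)
        _ ≤ 2 * π * M * |x - y| ^ α := by nlinarith [mul_nonneg (mul_nonneg hπ.le hM0) hrp]
  · push_neg at hx
    rw [hZ x hx, zero_sub, abs_neg]
    by_cases hy : ∃ l, y ∈ Set.Icc (aa l) (tp l)
    · obtain ⟨l, hl⟩ := hy
      calc |f y| ≤ π * M * |y - x| ^ α := key y x l hl (hx l)
        _ = π * M * |x - y| ^ α := by rw [abs_sub_comm]
        _ ≤ 2 * π * M * |x - y| ^ α := by nlinarith [mul_nonneg (mul_nonneg hπ.le hM0) hrp]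
    · push_neg at hy
      rw [hZ y hy, abs_zero]
      positivity


/-- Itinerary lemma: if each set `J j` is contained in the image of every `J i`,
then every finite itinerary is realized. -/
lemma itinerary {f : ℝ → ℝ} {d : ℕ} {J : Fin d → Set ℝ} (hne : ∀ i, (J i).Nonempty)
    (hcov : ∀ i j, J j ⊆ f '' (J i)) :
    ∀ (N : ℕ) (ω : ℕ → Fin d), ∃ x, ∀ i ≤ N, f^[i] x ∈ J (ω i) := by
  intro N
  induction N with
  | zero =>
    intro ω
    obtain ⟨x, hx⟩ := hne (ω 0)
    exact ⟨x, fun i hi => by rw [Nat.le_zero.1 hi]; simpa using hx⟩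
  | succ N ih =>
    intro ω
    obtain ⟨y, hy⟩ := ih (fun i => ω (i + 1))
    have hy0 : y ∈ J (ω 1) := by simpa using hy 0 (Nat.zero_le N)
    obtain ⟨x, hx, hfx⟩ := hcov (ω 0) (ω 1) hy0
    refine ⟨x, fun i hi => ?_⟩
    cases i with
    | zero => simpa using hx
    | succ i =>
      rw [Function.iterate_succ_apply, hfx]
      exact hy i (Nat.succ_le_succ_iff.1 hi)

open Dynamics UniformSpace in
/-- From a family of `d` mutually covering, `ε`-separated sets we get `d ^ N` points
in `(U, N)`-dynamical nets. -/
lemma le_netMaxcard_of_sep {f : ℝ → ℝ} {d : ℕ} (hd : 0 < d) {J : Fin d → Set ℝ} {ε : ℝ}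
    (hε : 0 < ε) (hne : ∀ i, (J i).Nonempty) (hcov : ∀ i j, J j ⊆ f '' (J i))
    (hsep : ∀ i j, i ≠ j → ∀ x ∈ J i, ∀ y ∈ J j, ε ≤ |x - y|) (N : ℕ) :
    (d ^ N : ℕ∞) ≤
      netMaxcard f (closure (Set.range f)) {p : ℝ × ℝ | dist p.1 p.2 < ε / 2} N := by
  classical
  set U : Set (ℝ × ℝ) := {p : ℝ × ℝ | dist p.1 p.2 < ε / 2} with hU
  have dne : Fin d := ⟨0, hd⟩
  -- extend a finite word to an infinite one
  set Ω : (Fin N → Fin d) → ℕ → Fin d := fun ω i =>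
    if h : 1 ≤ i ∧ i - 1 < N then ω ⟨i - 1, h.2⟩ else dne with hΩ
  have hpt : ∀ ω : Fin N → Fin d, ∃ x, ∀ i ≤ N, f^[i] x ∈ J (Ω ω i) :=
    fun ω => itinerary hne hcov N (Ω ω)
  set y : (Fin N → Fin d) → ℝ := fun ω => f ((hpt ω).choose) with hy
  have hyJ : ∀ ω (i : Fin N), f^[(i:ℕ)] (y ω) ∈ J (ω i) := by
    intro ω i
    have h1 : f^[(i:ℕ) + 1] ((hpt ω).choose) ∈ J (Ω ω ((i:ℕ) + 1)) :=
      (hpt ω).choose_spec ((i:ℕ) + 1) (Nat.succ_le_of_lt i.2)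
    have h2 : Ω ω ((i:ℕ) + 1) = ω i := by
      rw [hΩ]
      simp only [Nat.add_sub_cancel, le_add_iff_nonneg_left, zero_le, true_and, i.2, dif_pos]
    rw [← h2]
    rw [hy]
    rw [← Function.iterate_succ_apply f (i:ℕ) ((hpt ω).choose)]
    exact h1
  have hinj : Function.Injective y := by
    intro ω ω' hωω
    funext i
    by_contra hne'
    have h1 := hyJ ω i
    have h2 := hyJ ω' i
    rw [hωω] at h1
    have := hsep (ω i) (ω' i) hne' _ h1 _ h2
    simp at this
    linarith
  set s : Finset ℝ := Finset.image y Finset.univ with hs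
  have hcard : s.card = d ^ N := by
    rw [hs, Finset.card_image_of_injective _ hinj, Finset.card_univ, Fintype.card_fun]
    simp
  have hnet : IsDynNetIn f (closure (Set.range f)) U N (s : Set ℝ) := by
    constructor
    · intro u hu
      simp only [hs, Finset.coe_image, Set.mem_image] at hu
      obtain ⟨ω, -, rfl⟩ := hu
      exact subset_closure (Set.mem_range_self _)
    · intro u hu v hv huv
      simp only [hs, Finset.coe_image, Finset.coe_univ, Set.image_univ, Set.mem_range] at hu hv
      obtain ⟨ω, rfl⟩ := hu
      obtain ⟨ω', rfl⟩ := hv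
      have hωω' : ω ≠ ω' := fun h => huv (by rw [h])
      obtain ⟨i, hi⟩ := Function.ne_iff.1 hωω'
      refine Set.disjoint_left.2 (fun z hz hz' => ?_)
      rw [mem_ball_dynEntourage] at hz hz'
      have h1 := hz (i:ℕ) i.2
      have h2 := hz' (i:ℕ) i.2
      rw [ball, Set.mem_preimage, hU] at h1 h2
      simp only [Set.mem_setOf_eq] at h1 h2
      have hs' := hsep (ω i) (ω' i) hi _ (hyJ ω i) _ (hyJ ω' i)
      rw [Real.dist_eq] at h1 h2
      have : |f^[(i:ℕ)] (y ω) - f^[(i:ℕ)] (y ω')| ≤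
          |f^[(i:ℕ)] (y ω) - f^[(i:ℕ)] z| + |f^[(i:ℕ)] z - f^[(i:ℕ)] (y ω')| := by
        exact abs_sub_le _ _ _
      rw [abs_sub_comm (f^[(i:ℕ)] z)] at this
      linarith
  have := hnet.card_le_netMaxcard
  rwa [hcard] at this

open Dynamics in
lemma log_le_coverEntropy {f : ℝ → ℝ} {d : ℕ} (hd : 0 < d) {J : Fin d → Set ℝ} {ε : ℝ}
    (hε : 0 < ε) (hne : ∀ i, (J i).Nonempty) (hcov : ∀ i j, J j ⊆ f '' (J i))
    (hsep : ∀ i j, i ≠ j → ∀ x ∈ J i, ∀ y ∈ J j, ε ≤ |x - y|) :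
    ENNReal.log d ≤ coverEntropy f (closure (Set.range f)) := by
  set F := closure (Set.range f) with hF
  set U : Set (ℝ × ℝ) := {p : ℝ × ℝ | dist p.1 p.2 < ε / 2} with hU
  have hUu : U ∈ uniformity ℝ := Metric.dist_mem_uniformity (by positivity)
  refine le_trans ?_ (le_trans (netEntropyInfEntourage_le_netEntropyEntourage f F U)
    (netEntropyEntourage_le_coverEntropy f F hUu))
  rw [netEntropyInfEntourage]
  refine Filter.le_liminf_of_le (by isBoundedDefault) ?_
  filter_upwards [Filter.eventually_ge_atTop 1] with n hn
  have hn0 : (0:EReal) < (n:EReal) := by exact_mod_cast hn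
  rw [EReal.le_div_iff_mul_le hn0 (EReal.natCast_ne_top n)]
  have h2 : ((d ^ n : ℕ∞) : ℝ≥0∞) ≤ ((netMaxcard f F U n : ℕ∞) : ℝ≥0∞) :=
    ENat.toENNReal_le.2 (le_netMaxcard_of_sep hd hε hne hcov hsep n)
  have h3 : ENNReal.log ((d:ℝ≥0∞) ^ n) ≤ ENNReal.log (netMaxcard f F U n) := by
    refine le_trans (le_of_eq ?_) (ENNReal.log_monotone h2)
    congr 1
    push_cast
    rfl
  calc ENNReal.log (d:ℝ≥0∞) * (n:EReal) = (n : EReal) * ENNReal.log (d:ℝ≥0∞) := mul_comm _ _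
    _ = ENNReal.log ((d:ℝ≥0∞)^n) := ENNReal.log_pow.symm
    _ ≤ _ := h3

open Dynamics in
/-- If `f` agrees with `c • bump α k` on block `k` and the scaled height covers the block,
then the entropy of `f` is at least `log (dd k)`. -/
lemma block_entropy {α : ℝ} {f : ℝ → ℝ} {c : ℝ} (hc : c ≠ 0) (k : ℕ)
    (hf : ∀ x ∈ Set.Icc (aa k) (tp k), f x = c * bump α k x)
    (hcov : tp k ≤ |c| * hh α k) :
    ENNReal.log (dd k) ≤ coverEntropy f (closure (Set.range f)) := by
  set J : Fin (dd k) → Set ℝ := fun j => Set.Icc (leftT k j) (rightT k j) with hJ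
  have hne : ∀ i, (J i).Nonempty := fun i => Set.nonempty_Icc.2 (leftT_lt_rightT k i).le
  have hsep : ∀ i j, i ≠ j → ∀ x ∈ J i, ∀ y ∈ J j, ww k ≤ |x - y| := by
    intro i j hij x hx y hy
    exact tooth_sep (fun h => hij (Fin.ext h)) hx hy
  have hcv : ∀ i j, J j ⊆ f '' (J i) := by
    intro i j
    have hlr := (leftT_lt_rightT k i).le
    have hsub := tooth_subset (k := k) i.2
    have hcb : ContinuousOn (fun x => c * bump α k x) (Set.Icc (leftT k i) (rightT k i)) :=
      (continuous_const.mul (bump_continuous α k)).continuousOn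
    have hcont : ContinuousOn f (Set.Icc (leftT k i) (rightT k i)) :=
      hcb.congr (fun z hz => hf z (hsub hz))
    have hfl : f (leftT k i) = c * hh α k := by
      rw [hf _ (hsub ⟨le_rfl, hlr⟩), bump_leftT i.2]
    have hfr : f (rightT k i) = -(c * hh α k) := by
      rw [hf _ (hsub ⟨hlr, le_rfl⟩), bump_rightT i.2]
      ring
    have himg : Set.Icc (-(|c| * hh α k)) (|c| * hh α k) ⊆ f '' (J i) := by
      rcases hc.lt_or_gt with hneg | hpos
      · have habs : |c| = -c := abs_of_neg hneg
        have h1 := intermediate_value_Icc hlr hcont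
        rw [hfl, hfr] at h1
        rw [habs]
        refine subset_trans (le_of_eq ?_) h1
        congr 1 <;> ring
      · have habs : |c| = c := abs_of_pos hpos
        have h1 := intermediate_value_Icc' hlr hcont
        rw [hfl, hfr] at h1
        rw [habs]
        exact h1
    refine subset_trans ?_ himg
    refine subset_trans (tooth_subset j.2) (Set.Icc_subset_Icc ?_ hcov)
    have h1 := aa_pos k
    have h2 : 0 < |c| * hh α k := mul_pos (abs_pos.2 hc) (hh_pos k)
    linarith
  exact log_le_coverEntropy (dd_pos k) (ww_pos k) hne hcv hsep

lemma nn_pair (n m : ℕ) : nn (Nat.pair n m) = n := by rw [nn, Nat.unpair_pair]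
lemma dd_pair (n e j : ℕ) : dd (Nat.pair n (Nat.pair e j)) = e + 1 := by
  rw [dd, Nat.unpair_pair, Nat.unpair_pair]

/-- For every nonzero coefficient `c`, every function index `n` and every teeth number,
there is a block assigned to `n` with that many teeth on which the scaled bump covers
the whole block. -/
lemma exists_block {α : ℝ} (hα : α ∈ Set.Ioo (0:ℝ) 1) (n e : ℕ) {c : ℝ} (hc : c ≠ 0) :
    ∃ k, nn k = n ∧ dd k = e + 1 ∧ tp k ≤ |c| * hh α k := by
  set D : ℝ := 2 * (e + 1 : ℕ) with hD
  have hD0 : (0:ℝ) < D := by rw [hD]; positivity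
  have hDα : (0:ℝ) < D ^ α := Real.rpow_pos_of_pos hD0 α
  set ρ : ℝ := (4:ℝ)⁻¹ ^ (1 - α) with hρ
  have hρ0 : 0 < ρ := Real.rpow_pos_of_pos (by norm_num) _
  have hρ1 : ρ < 1 := Real.rpow_lt_one (by norm_num) (by norm_num) (by linarith [hα.2])
  have htend : Filter.Tendsto (fun j : ℕ => ρ ^ j) Filter.atTop (nhds 0) :=
    tendsto_pow_atTop_nhds_zero_of_lt_one hρ0.le hρ1
  have hc0 : 0 < |c| / D ^ α / 2 := by positivity
  obtain ⟨j, hj⟩ := ((htend.eventually (gt_mem_nhds hc0)).and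
    (Filter.eventually_ge_atTop 0)).exists
  set k := Nat.pair n (Nat.pair e j) with hk
  refine ⟨k, nn_pair n _, by rw [hk, dd_pair], ?_⟩
  have hkj : j ≤ k := le_trans (Nat.right_le_pair e j) (Nat.right_le_pair n _)
  have ha := aa_pos k
  -- aa k ^ (1 - α) ≤ ρ ^ j
  have h1 : aa k ^ (1 - α) ≤ ρ ^ j := by
    have e1 : aa k ^ (1-α) = ρ ^ k := by
      rw [aa, hρ, ← Real.rpow_natCast (4:ℝ)⁻¹ k, ← Real.rpow_mul (by norm_num), mul_comm,
        Real.rpow_mul (by norm_num), Real.rpow_natCast]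
    rw [e1]
    exact pow_le_pow_of_le_one hρ0.le hρ1.le hkj
  have h2 : 2 * aa k ^ (1 - α) ≤ |c| / D ^ α := by
    have := hj.1
    nlinarith
  -- now convert
  have hdd : dd k = e + 1 := by rw [hk, dd_pair]
  have hhh : hh α k = aa k ^ α / D ^ α := by
    rw [hh, ww, hdd, ← hD, Real.div_rpow ha.le hD0.le]
  have hα0 : (0:ℝ) < aa k ^ α := Real.rpow_pos_of_pos ha α
  rw [tp, hhh]
  calc 2 * aa k = 2 * aa k ^ (1-α) * aa k ^ α := by
        rw [mul_assoc, ← Real.rpow_add ha]; norm_num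
    _ ≤ (|c| / D ^ α) * aa k ^ α := mul_le_mul_of_nonneg_right h2 hα0.le
    _ = |c| * (aa k ^ α / D ^ α) := by ring


open Dynamics in
lemma adapted_entropy {α : ℝ} (hα : α ∈ Set.Ioo (0:ℝ) 1) {f : ℝ → ℝ} {c : ℝ} (hc : c ≠ 0)
    (n : ℕ) (hf : ∀ k, nn k = n → ∀ x ∈ Set.Icc (aa k) (tp k), f x = c * bump α k x) :
    coverEntropy f (closure (Set.range f)) = ⊤ := by
  rw [EReal.eq_top_iff_forall_lt]
  intro y
  set e : ℕ := ⌈Real.exp y⌉₊ with he_def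
  have he : Real.exp y < (e:ℝ) + 1 := lt_of_le_of_lt (Nat.le_ceil _) (by linarith)
  have hy : y < Real.log ((e:ℝ)+1) := (Real.lt_log_iff_exp_lt (by positivity)).2 he
  obtain ⟨k, hk1, hk2, hk3⟩ := exists_block hα n e hc
  have h1 := block_entropy hc k (hf k hk1) hk3
  rw [hk2] at h1
  refine lt_of_lt_of_le ?_ h1
  have h2 : ENNReal.log ((e+1 : ℕ) : ℝ≥0∞) = (Real.log ((e:ℝ)+1) : EReal) := by
    rw [← ENNReal.ofReal_natCast (e+1),
      ENNReal.log_ofReal_of_pos (by exact_mod_cast Nat.succ_pos e)]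
    norm_num
  rw [h2]
  exact_mod_cast hy

/-- The spanning functions as bounded continuous functions. -/
def Gbcf (α : ℝ) (hα : 0 < α) (n : ℕ) : ℝ →ᵇ ℝ :=
  BoundedContinuousFunction.mkOfBound ⟨gfun α n, gfun_continuous hα n⟩ (2 * ∑' k, uu α k)
    (fun x y => by
      rw [Real.dist_eq]
      have h1 := abs_gfun_le hα n x
      have h2 := abs_gfun_le hα n y
      have h3 := abs_sub (gfun α n x) (gfun α n y)
      simp only [ContinuousMap.coe_mk]
      linarith)

lemma coe_Gbcf (α : ℝ) (hα : 0 < α) (n : ℕ) : ⇑(Gbcf α hα n) = gfun α n := rfl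

lemma lin_comb_eval {α : ℝ} (hα : 0 < α) (l : ℕ →₀ ℝ) (x : ℝ) :
    (l.sum fun n a => a • Gbcf α hα n) x = ∑ n ∈ l.support, l n * gfun α n x := by
  rw [Finsupp.sum]
  rw [show ⇑(∑ n ∈ l.support, l n • Gbcf α hα n) = ∑ n ∈ l.support, ⇑(l n • Gbcf α hα n) from
    BoundedContinuousFunction.coe_sum _ _]
  rw [Finset.sum_apply]
  refine Finset.sum_congr rfl (fun n _ => ?_)
  simp [coe_Gbcf]

lemma sum_eval_block {α : ℝ} (hα : 0 < α) (l : ℕ →₀ ℝ) {k : ℕ} {x : ℝ}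
    (hx : x ∈ Set.Icc (aa k) (tp k)) :
    ∑ n ∈ l.support, l n * gfun α n x = l (nn k) * bump α k x := by
  have h1 : ∀ n, gfun α n x = ind n k * bump α k x := fun n => gfun_eq_on_block hα hx
  rw [Finset.sum_congr rfl (fun n _ => by rw [h1 n])]
  rw [Finset.sum_eq_single (nn k)]
  · rw [ind, if_pos rfl, one_mul]
  · intro b _ hbne
    rw [ind, if_neg (fun h => hbne h.symm)]
    ring
  · intro h
    rw [Finsupp.notMem_support_iff.1 h]
    ring

lemma sum_eval_zero {α : ℝ} (hα : 0 < α) (l : ℕ →₀ ℝ) {x : ℝ}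
    (hx : ∀ k, x ∉ Set.Icc (aa k) (tp k)) :
    ∑ n ∈ l.support, l n * gfun α n x = 0 :=
  Finset.sum_eq_zero (fun n _ => by rw [gfun_eq_zero hα hx, mul_zero])

lemma Gbcf_linearIndependent (α : ℝ) (hα : α ∈ Set.Ioo (0:ℝ) 1) :
    LinearIndependent ℝ (Gbcf α hα.1) := by
  rw [linearIndependent_iff]
  intro l hl
  ext n
  set k : ℕ := Nat.pair n 0 with hk
  have hnn : nn k = n := nn_pair n 0
  set x : ℝ := leftT k 0 with hx
  have hmem : x ∈ Set.Icc (aa k) (tp k) := leftT_mem (dd_pos k)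
  have h1 : (Finsupp.linearCombination ℝ (Gbcf α hα.1) l) x = 0 := by rw [hl]; rfl
  rw [Finsupp.linearCombination_apply, lin_comb_eval hα.1, sum_eval_block hα.1 l hmem,
    hnn, bump_leftT (dd_pos k)] at h1
  rcases mul_eq_zero.1 h1 with h | h
  · simpa using h
  · exact absurd h (hh_pos k).ne'
end
end HolderEntropy

theorem exists_holder_subspace_infinite_entropy (α : ℝ) (hα : α ∈ Set.Ioo (0 : ℝ) 1) :
    ∃ A : Submodule ℝ (ℝ →ᵇ ℝ),
      ¬ Module.Finite ℝ A ∧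
      (∀ f ∈ A, ∃ C : ℝ, ∀ x y : ℝ, 0 < |x - y| → |x - y| ≤ 1 →
        |f x - f y| ≤ C * |x - y| ^ α) ∧
      (∀ f ∈ A, f ≠ 0 → htop f = ⊤) := by
  classical
  set G := HolderEntropy.Gbcf α hα.1 with hG
  set A : Submodule ℝ (ℝ →ᵇ ℝ) := Submodule.span ℝ (Set.range G) with hA
  have hGA : ∀ n, G n ∈ A := fun n => Submodule.subset_span (Set.mem_range_self n)
  have hli : LinearIndependent ℝ G := HolderEntropy.Gbcf_linearIndependent α hα
  have hrep : ∀ f ∈ A, ∃ l : ℕ →₀ ℝ, (l.sum fun i a => a • G i) = f := by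
    intro f hf
    exact Finsupp.mem_span_range_iff_exists_finsupp.1 hf
  refine ⟨A, ?_, ?_, ?_⟩
  · intro hfin
    haveI := hfin
    exact Module.Finite.not_linearIndependent_of_infinite _ (linearIndependent_span hli)
  · intro f hf
    obtain ⟨l, hl⟩ := hrep f hf
    set M := ∑ n ∈ l.support, |l n| with hM
    have hMk : ∀ k, |l (HolderEntropy.nn k)| ≤ M := by
      intro k
      by_cases h : HolderEntropy.nn k ∈ l.support
      · exact Finset.single_le_sum (f := fun n => |l n|) (fun i _ => abs_nonneg _) h
      · rw [Finsupp.notMem_support_iff.1 h, abs_zero]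
        exact Finset.sum_nonneg (fun i _ => abs_nonneg _)
    have hfx : ∀ z : ℝ, f z = ∑ n ∈ l.support, l n * HolderEntropy.gfun α n z := by
      intro z
      rw [← hl, hG, HolderEntropy.lin_comb_eval hα.1]
    refine ⟨2 * Real.pi * M, fun x y _ _ => ?_⟩
    have := HolderEntropy.adapted_holder hα (f := ⇑f) (γ := fun k => l (HolderEntropy.nn k))
      (M := M) ?_ ?_ hMk x y
    · exact this
    · intro k x hx
      rw [hfx x, HolderEntropy.sum_eval_block hα.1 l hx]
    · intro x hx
      rw [hfx x, HolderEntropy.sum_eval_zero hα.1 l hx]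
  · intro f hf hf0
    obtain ⟨l, hl⟩ := hrep f hf
    have hfx : ∀ z : ℝ, f z = ∑ n ∈ l.support, l n * HolderEntropy.gfun α n z := by
      intro z
      rw [← hl, hG, HolderEntropy.lin_comb_eval hα.1]
    have hl0 : l ≠ 0 := by
      rintro rfl
      apply hf0
      rw [← hl]
      simp
    obtain ⟨n0, hn0⟩ : ∃ n0, l n0 ≠ 0 := by
      by_contra h
      push_neg at h
      exact hl0 (Finsupp.ext h)
    refine HolderEntropy.adapted_entropy hα hn0 n0 ?_
    intro k hk x hx
    rw [hfx x, HolderEntropy.sum_eval_block hα.1 l hx, hk]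
end

section
/- For every integer d ≥ 1 and every real λ with |λ| ≥ 2πd, the function x ↦ λ·sin(x) has a d-horseshoe. Consequently, for the one-dimensional subspace B = {λ·sin : λ ∈ ℝ} of bounded continuous functions ℝ → ℝ, one has h_top^+(B) = ∞. -/
open BoundedContinuousFunction

open Set

/-- helper: exact image interval, ordered version -/
lemma exists_image_eq_Icc_aux {h : ℝ → ℝ} (hc : Continuous h) {p q c e : ℝ}
    (hpq : p ≤ q) (hce : c ≤ e) (hp : h p = c) (hq : h q = e) :
    ∃ a' b', p ≤ a' ∧ a' ≤ b' ∧ b' ≤ q ∧ h '' Icc a' b' = Icc c e := by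
  set A := Icc p q ∩ h ⁻¹' {c} with hA
  have Acpt : IsCompact A := isCompact_Icc.inter_right (isClosed_singleton.preimage hc)
  have Ane : A.Nonempty := ⟨p, ⟨le_refl p, hpq⟩, hp⟩
  set a' := sSup A with ha'
  have ha'A : a' ∈ A := Acpt.sSup_mem Ane
  have ha'ub : ∀ x ∈ A, x ≤ a' := fun x hx => le_csSup Acpt.bddAbove hx
  set B := Icc a' q ∩ h ⁻¹' {e} with hB
  have Bcpt : IsCompact B := isCompact_Icc.inter_right (isClosed_singleton.preimage hc)
  have Bne : B.Nonempty := ⟨q, ⟨ha'A.1.2, le_refl q⟩, hq⟩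
  set b' := sInf B with hb'
  have hb'B : b' ∈ B := Bcpt.sInf_mem Bne
  have hb'lb : ∀ x ∈ B, b' ≤ x := fun x hx => csInf_le Bcpt.bddBelow hx
  have ha : h a' = c := ha'A.2
  have hbv : h b' = e := hb'B.2
  refine ⟨a', b', ha'A.1.1, hb'B.1.1, hb'B.1.2, ?_⟩
  apply Subset.antisymm
  · rintro y ⟨x, hx, rfl⟩
    constructor
    · by_contra hlt
      push_neg at hlt
      have : c ∈ Icc (h x) (h b') := ⟨hlt.le, hbv ▸ hce⟩
      obtain ⟨y, hy, hyc⟩ := intermediate_value_Icc hx.2 hc.continuousOn this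
      have hxa : a' < x := lt_of_le_of_ne hx.1 (fun hxe => by rw [← hxe, ha] at hlt; exact lt_irrefl _ hlt)
      have : y ∈ A := ⟨⟨le_trans ha'A.1.1 (le_trans hx.1 hy.1), le_trans hy.2 hb'B.1.2⟩, hyc⟩
      exact absurd (ha'ub y this) (not_le.2 (lt_of_lt_of_le hxa hy.1))
    · by_contra hlt
      push_neg at hlt
      have : e ∈ Icc (h a') (h x) := ⟨ha ▸ hce, hlt.le⟩
      obtain ⟨y, hy, hye⟩ := intermediate_value_Icc hx.1 hc.continuousOn this
      have hxb : x < b' := lt_of_le_of_ne hx.2 (fun hxe => by rw [hxe, hbv] at hlt; exact lt_irrefl _ hlt)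
      have : y ∈ B := ⟨⟨hy.1, le_trans hy.2 (le_trans hx.2 hb'B.1.2)⟩, hye⟩
      exact absurd (hb'lb y this) (not_le.2 (lt_of_le_of_lt hy.2 hxb))
  · rw [← ha, ← hbv]
    exact intermediate_value_Icc hb'B.1.1 hc.continuousOn

lemma exists_image_eq_Icc {h : ℝ → ℝ} (hc : Continuous h) {a b c e : ℝ}
    (hab : a ≤ b) (hce : c ≤ e) (hsub : Icc c e ⊆ h '' Icc a b) :
    ∃ a' b', a ≤ a' ∧ a' ≤ b' ∧ b' ≤ b ∧ h '' Icc a' b' = Icc c e := by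
  obtain ⟨p, hpab, hp⟩ := hsub ⟨le_refl c, hce⟩
  obtain ⟨q, hqab, hq⟩ := hsub ⟨hce, le_refl e⟩
  rcases le_total p q with hpq | hqp
  · obtain ⟨a', b', h1, h2, h3, h4⟩ := exists_image_eq_Icc_aux hc hpq hce hp hq
    exact ⟨a', b', hpab.1.trans h1, h2, h3.trans hqab.2, h4⟩
  · set s := p + q with hs
    have gc : Continuous (fun x => h (s - x)) := hc.comp (continuous_const.sub continuous_id)
    have h1 : s - p = q := by ring
    have h2 : s - q = p := by ring
    obtain ⟨u, v, hu, huv, hv, himg⟩ := exists_image_eq_Icc_aux gc (p := s - p) (q := s - q)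
      (by linarith) hce (by simpa [sub_sub_cancel] using hp) (by simpa [sub_sub_cancel] using hq)
    have hu' : q ≤ u := by linarith
    have hv' : v ≤ p := by linarith
    refine ⟨s - v, s - u, hqab.1.trans (by linarith), by linarith, (show s - u ≤ p by linarith).trans hpab.2, ?_⟩
    rw [← Set.image_const_sub_Icc, Set.image_image]
    exact himg

lemma itinerary_s14 {f : ℝ → ℝ} (hf : Continuous f) {d : ℕ} {a b : Fin d → ℝ}
    (hab : ∀ k, a k ≤ b k)
    (hcov : ∀ i j, Icc (a j) (b j) ⊆ f '' Icc (a i) (b i)) (n : ℕ) (w : ℕ → Fin d) :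
    ∃ u v : ℝ, u ≤ v ∧ Icc u v ⊆ Icc (a (w 0)) (b (w 0)) ∧
      (∀ i ≤ n, f^[i] '' Icc u v ⊆ Icc (a (w i)) (b (w i))) ∧
      f^[n] '' Icc u v = Icc (a (w n)) (b (w n)) := by
  induction n with
  | zero =>
    refine ⟨a (w 0), b (w 0), hab _, le_refl _, ?_, by simp⟩
    intro i hi
    interval_cases i
    simp
  | succ n ih =>
    obtain ⟨u, v, huv, hsub0, hall, heq⟩ := ih
    have himg : Icc (a (w (n+1))) (b (w (n+1))) ⊆ f^[n+1] '' Icc u v := by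
      rw [Function.iterate_succ', Set.image_comp]
      rw [heq]
      exact hcov _ _
    obtain ⟨u', v', hu', huv', hv', heq'⟩ :=
      exists_image_eq_Icc (hf.iterate (n+1)) huv (hab _) himg
    have hsub : Icc u' v' ⊆ Icc u v := Icc_subset_Icc hu' hv'
    refine ⟨u', v', huv', hsub.trans hsub0, ?_, heq'⟩
    intro i hi
    rcases Nat.le_succ_iff.1 hi |>.symm.imp id id with h | h
    · rw [h, heq']
    · exact (Set.image_mono hsub).trans (hall i h)

lemma itinerary_point {f : ℝ → ℝ} (hf : Continuous f) {d : ℕ} {a b : Fin d → ℝ}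
    (hab : ∀ k, a k ≤ b k)
    (hcov : ∀ i j, Icc (a j) (b j) ⊆ f '' Icc (a i) (b i)) (n : ℕ) (w : ℕ → Fin d) :
    ∃ x : ℝ, ∀ i ≤ n, f^[i] x ∈ Icc (a (w i)) (b (w i)) := by
  obtain ⟨u, v, huv, _, hall, _⟩ := itinerary_s14 hf hab hcov n w
  exact ⟨u, fun i hi => hall i hi ⟨u, ⟨le_refl u, huv⟩, rfl⟩⟩

open Real in
lemma sin_b_val (k : ℕ) : Real.sin (3*π/2 + k*(2*π)) = -1 := by
  have h : 3*π/2 + (k:ℝ)*(2*π) = -(π/2) + ((k+1 : ℕ):ℝ)*(2*π) := by push_cast; ring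
  rw [h, Real.sin_add_nat_mul_two_pi, Real.sin_neg, Real.sin_pi_div_two]

open Real in
lemma sin_a_val (k : ℕ) : Real.sin (π/2 + k*(2*π)) = 1 := by
  rw [Real.sin_add_nat_mul_two_pi, Real.sin_pi_div_two]

open Real in
lemma sin_cov {d : ℕ} {lam : ℝ} (hlam : 2 * π * d ≤ |lam|) (i j : Fin d) :
    Icc (π/2 + (j:ℕ)*(2*π)) (3*π/2 + (j:ℕ)*(2*π)) ⊆
      (fun x : ℝ => lam * Real.sin x) '' Icc (π/2 + (i:ℕ)*(2*π)) (3*π/2 + (i:ℕ)*(2*π)) := by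
  have hpi := Real.pi_pos
  set f : ℝ → ℝ := fun x => lam * Real.sin x with hf
  have hab : (π/2 + (i:ℕ)*(2*π)) ≤ (3*π/2 + (i:ℕ)*(2*π)) := by linarith
  have key : uIcc (f (π/2 + (i:ℕ)*(2*π))) (f (3*π/2 + (i:ℕ)*(2*π))) ⊆
      f '' Icc (π/2 + (i:ℕ)*(2*π)) (3*π/2 + (i:ℕ)*(2*π)) := by
    rw [← Set.uIcc_of_le hab]
    exact intermediate_value_uIcc ((continuous_const.mul Real.continuous_sin).continuousOn)
  have hfa : f (π/2 + (i:ℕ)*(2*π)) = lam := by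
    show lam * Real.sin _ = lam; rw [sin_a_val]; ring
  have hfb : f (3*π/2 + (i:ℕ)*(2*π)) = -lam := by
    show lam * Real.sin _ = -lam; rw [sin_b_val]; ring
  rw [hfa, hfb] at key
  refine Subset.trans ?_ key
  intro x hx
  have hj : ((j:ℕ):ℝ) ≤ (d:ℝ) - 1 := by
    have := j.isLt
    have : ((j:ℕ):ℝ) + 1 ≤ (d:ℝ) := by exact_mod_cast Nat.succ_le_of_lt this
    linarith
  have hx0 : 0 ≤ x := le_trans (by positivity) hx.1
  have hxd : x ≤ |lam| := by
    refine le_trans hx.2 (le_trans ?_ hlam)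
    nlinarith
  rcases le_total 0 lam with h0 | h0
  · exact mem_uIcc_of_ge (by rw [abs_of_nonneg h0] at hxd; linarith) (by rw [abs_of_nonneg h0] at hxd; linarith)
  · exact mem_uIcc_of_le (by rw [abs_of_nonpos h0] at hxd; linarith) (by rw [abs_of_nonpos h0] at hxd; linarith)

open Real in
lemma sin_horseshoe {d : ℕ} (hd : 1 ≤ d) {lam : ℝ} (hlam : 2 * π * d ≤ |lam|) :
    HasHorseshoe (fun x : ℝ => lam * Real.sin x) d := by
  have hpi := Real.pi_pos
  refine ⟨fun k => (π/2 + (k:ℕ)*(2*π), 3*π/2 + (k:ℕ)*(2*π)), fun k => by simp; linarith, ?_, ?_⟩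
  · intro i j hij
    rw [interior_Icc, interior_Icc]
    rcases Ne.lt_or_gt (fun h => hij (Fin.ext h) : (i:ℕ) ≠ (j:ℕ)) with h | h
    · have : ((i:ℕ):ℝ) + 1 ≤ ((j:ℕ):ℝ) := by exact_mod_cast Nat.succ_le_of_lt h
      refine Set.disjoint_left.2 fun x hx hx' => ?_
      simp only [mem_Ioo] at hx hx'
      nlinarith [hx.2, hx'.1]
    · have : ((j:ℕ):ℝ) + 1 ≤ ((i:ℕ):ℝ) := by exact_mod_cast Nat.succ_le_of_lt h
      refine Set.disjoint_left.2 fun x hx hx' => ?_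
      simp only [mem_Ioo] at hx hx'
      nlinarith [hx.1, hx'.2]
  · exact fun i j => sin_cov hlam i j

open scoped ENNReal in
open Real Dynamics UniformSpace in
lemma entropy_ge {d : ℕ} (hd : 1 ≤ d) :
    ENNReal.log (d : ℝ≥0∞) ≤ htop (fun x : ℝ => (2*π*d) * Real.sin x) := by
  have hpi := Real.pi_pos
  set lam : ℝ := 2*π*d with hlamdef
  have hlam : 2 * π * d ≤ |lam| := by rw [abs_of_nonneg (by positivity)]
  set f : ℝ → ℝ := fun x => lam * Real.sin x with hfdef
  have hf : Continuous f := continuous_const.mul Real.continuous_sin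
  set a : Fin d → ℝ := fun k => π/2 + (k:ℕ)*(2*π) with hadef
  set b : Fin d → ℝ := fun k => 3*π/2 + (k:ℕ)*(2*π) with hbdef
  have hab : ∀ k, a k ≤ b k := fun k => by simp only [hadef, hbdef]; linarith
  have hcov : ∀ i j : Fin d, Icc (a j) (b j) ⊆ f '' Icc (a i) (b i) := fun i j =>
    sin_cov hlam i j
  set F : Set ℝ := closure (Set.range f) with hFdef
  have hIF : ∀ k, Icc (a k) (b k) ⊆ F := fun k =>
    (hcov ⟨0, hd⟩ k).trans ((Set.image_subset_range f _).trans subset_closure)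
  have hsep : ∀ i j : Fin d, i ≠ j → ∀ x ∈ Icc (a i) (b i), ∀ y ∈ Icc (a j) (b j),
      π ≤ dist x y := by
    intro i j hij x hx y hy
    rw [Real.dist_eq]
    rcases Ne.lt_or_gt (fun h => hij (Fin.ext h) : (i:ℕ) ≠ (j:ℕ)) with h | h
    · have h1 : ((i:ℕ):ℝ) + 1 ≤ ((j:ℕ):ℝ) := by exact_mod_cast Nat.succ_le_of_lt h
      have := hx.2; have := hy.1
      have h2 : y - x ≤ |x - y| := by rw [abs_sub_comm]; exact le_abs_self _
      simp only [hadef, hbdef] at *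
      nlinarith
    · have h1 : ((j:ℕ):ℝ) + 1 ≤ ((i:ℕ):ℝ) := by exact_mod_cast Nat.succ_le_of_lt h
      have := hx.1; have := hy.2
      have h2 : x - y ≤ |x - y| := le_abs_self _
      simp only [hadef, hbdef] at *
      nlinarith
  set U : Set (ℝ × ℝ) := {p : ℝ × ℝ | dist p.1 p.2 < π/2} with hUdef
  have hU : U ∈ uniformity ℝ := Metric.dist_mem_uniformity (by positivity)
  -- the key cardinality bound
  have key : ∀ n : ℕ, 1 ≤ n → ((d^n : ℕ) : ℕ∞) ≤ netMaxcard f F U n := by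
    intro n hn
    have hn0 : 0 < n := hn
    choose x hx using fun w => itinerary_point hf hab hcov n w
    set extw : (Fin n → Fin d) → (ℕ → Fin d) :=
      fun v i => if h : i < n then v ⟨i, h⟩ else v ⟨0, hn0⟩ with hextw
    set e : (Fin n → Fin d) → ℝ := fun v => x (extw v) with he
    have horb : ∀ v : Fin n → Fin d, ∀ i : Fin n,
        f^[(i:ℕ)] (e v) ∈ Icc (a (v i)) (b (v i)) := by
      intro v i
      have := hx (extw v) i (le_of_lt i.isLt)
      simpa [hextw, i.isLt] using this
    have hsep' : ∀ v v' : Fin n → Fin d, ∀ i : Fin n, v i ≠ v' i →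
        π ≤ dist (f^[(i:ℕ)] (e v)) (f^[(i:ℕ)] (e v')) :=
      fun v v' i hne => hsep _ _ hne _ (horb v i) _ (horb v' i)
    have einj : Function.Injective e := by
      intro v v' hvv'
      by_contra hne
      obtain ⟨i, hi⟩ := Function.ne_iff.1 hne
      have := hsep' v v' i hi
      rw [hvv'] at this
      simp at this
      linarith
    have hnet : IsDynNetIn f F U n ↑(Finset.image e Finset.univ) := by
      constructor
      · intro p hp
        simp only [Finset.coe_image, Finset.coe_univ, Set.image_univ, Set.mem_range] at hp
        obtain ⟨v, rfl⟩ := hp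
        have := horb v ⟨0, hn0⟩
        simp only [Function.iterate_zero, id] at this
        exact hIF _ this
      · intro p hp q hq hpq
        simp only [Finset.coe_image, Finset.coe_univ, Set.image_univ, Set.mem_range] at hp hq
        obtain ⟨v, rfl⟩ := hp
        obtain ⟨v', rfl⟩ := hq
        refine Set.disjoint_left.2 fun z hz1 hz2 => ?_
        have hvv' : v ≠ v' := fun h => hpq (by rw [h])
        obtain ⟨i, hi⟩ := Function.ne_iff.1 hvv'
        have h1 := mem_ball_dynEntourage.1 hz1 i i.isLt
        have h2 := mem_ball_dynEntourage.1 hz2 i i.isLt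
        simp only [ball, hUdef, Set.mem_setOf_eq, Set.mem_preimage] at h1 h2
        have h3 := hsep' v v' i hi
        have h4 := dist_triangle (f^[(i:ℕ)] (e v)) (f^[(i:ℕ)] z) (f^[(i:ℕ)] (e v'))
        rw [dist_comm (f^[(i:ℕ)] z)] at h4
        linarith
    have hcard : (Finset.image e Finset.univ).card = d^n := by
      rw [Finset.card_image_of_injective _ einj, Finset.card_univ, Fintype.card_fun]
      simp
    have := hnet.card_le_netMaxcard
    rwa [hcard] at this
  -- from cardinality to entropy
  have hlog : ∀ n : ℕ, 1 ≤ n →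
      ENNReal.log (d : ℝ≥0∞) ≤ ENNReal.log (netMaxcard f F U n) / (n : EReal) := by
    intro n hn
    have h1 : ((d : ℝ≥0∞))^n ≤ (netMaxcard f F U n : ℝ≥0∞) := by
      have := ENat.toENNReal_le.2 (key n hn)
      rwa [show (((d^n : ℕ) : ℕ∞) : ℝ≥0∞) = ((d:ℝ≥0∞))^n by push_cast; rfl] at this
    have h2 := ENNReal.log_monotone h1
    rw [ENNReal.log_pow] at h2
    have hne : (n : EReal) ≠ 0 := by exact_mod_cast Nat.one_le_iff_ne_zero.1 hn
    have heq : ((n : EReal) * ENNReal.log (d : ℝ≥0∞)) / (n : EReal)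
        = ENNReal.log (d : ℝ≥0∞) := by
      rw [EReal.mul_comm, ← EReal.mul_div, EReal.div_self (EReal.natCast_ne_bot n) (EReal.natCast_ne_top n) hne, mul_one]
    calc ENNReal.log (d : ℝ≥0∞)
        = ((n : EReal) * ENNReal.log (d : ℝ≥0∞)) / (n : EReal) := heq.symm
      _ ≤ ENNReal.log (netMaxcard f F U n) / (n : EReal) :=
          EReal.div_le_div_right_of_nonneg (by exact_mod_cast Nat.zero_le n) h2
  have hnet : ENNReal.log (d : ℝ≥0∞) ≤ netEntropyEntourage f F U := by
    apply Filter.le_limsup_of_frequently_le'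
    exact (Filter.eventually_atTop.2 ⟨1, hlog⟩).frequently
  show ENNReal.log (d : ℝ≥0∞) ≤ Dynamics.coverEntropy f F
  rw [coverEntropy_eq_iSup_netEntropyEntourage]
  exact hnet.trans (le_iSup₂ (f := fun V (_ : V ∈ uniformity ℝ) => netEntropyEntourage f F V) U hU)

theorem sin_horseshoe_and_entropy_sup :
    (∀ d : ℕ, 1 ≤ d → ∀ lam : ℝ, 2 * Real.pi * d ≤ |lam| →
      HasHorseshoe (fun x : ℝ => lam * Real.sin x) d) ∧
    (⨆ lam : ℝ, htop (fun x : ℝ => lam * Real.sin x)) = ⊤ := by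
  constructor
  · exact fun d hd lam hlam => sin_horseshoe hd hlam
  · rw [iSup_eq_top]
    intro b hb
    obtain ⟨r, hbr⟩ : ∃ r : ℝ, b < (r : EReal) := by
      induction b using EReal.rec with
      | bot => exact ⟨0, EReal.bot_lt_coe 0⟩
      | coe s => exact ⟨s+1, by exact_mod_cast lt_add_one s⟩
      | top => exact absurd hb (lt_irrefl ⊤)
    set n : ℕ := ⌈Real.exp r⌉₊ + 1 with hn_def
    have hn : 1 ≤ n := Nat.le_add_left 1 _
    refine ⟨2*Real.pi*n, lt_of_lt_of_le (lt_of_lt_of_le hbr ?_) (entropy_ge hn)⟩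
    rw [ENNReal.log_pos_real (by exact_mod_cast Nat.one_le_iff_ne_zero.1 hn)
      (ENNReal.natCast_ne_top n), ENNReal.toReal_natCast]
    apply EReal.coe_le_coe_iff.2
    have h1 : Real.exp r < (n : ℝ) := by
      have := Nat.le_ceil (Real.exp r)
      have h2 : (⌈Real.exp r⌉₊ : ℝ) < n := by exact_mod_cast Nat.lt_succ_self _
      linarith
    have h0 : (0:ℝ) < n := by exact_mod_cast hn
    exact ((Real.lt_log_iff_exp_lt h0).2 h1).le
end
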